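/- arXiv:1712.05498 — 5 statements merged into one kernel-verified Lean document; each statement's English description precedes it below -/
import Mathlib

section
/- For every real m×n matrix A there exists a pair of mixed strategies (x⁰, y⁰), with x⁰ in the standard probability simplex of ℝ^m and y⁰ in the standard probability simplex of ℝ^n, such that xᵀ A y⁰ ≤ (x⁰)ᵀ A y⁰ ≤ (x⁰)ᵀ A y for every x in the standard probability simplex of ℝ^m and every y in the standard probability simplex of ℝ^n. -/
open Matrix

lemma dot_le {m : ℕ} {x z : Fin m → ℝ} {v : ℝ} (hx : x ∈ stdSimplex ℝ (Fin m))
    (hz : ∀ i, z i ≤ v) : x ⬝ᵥ z ≤ v := by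
  calc x ⬝ᵥ z = ∑ i, x i * z i := rfl
    _ ≤ ∑ i, x i * v := Finset.sum_le_sum fun i _ => mul_le_mul_of_nonneg_left (hz i) (hx.1 i)
    _ = v := by rw [← Finset.sum_mul, hx.2, one_mul]

lemma le_dot {m : ℕ} {x z : Fin m → ℝ} {v : ℝ} (hx : x ∈ stdSimplex ℝ (Fin m))
    (hz : ∀ i, v ≤ z i) : v ≤ x ⬝ᵥ z := by
  calc v = ∑ i, x i * v := by rw [← Finset.sum_mul, hx.2, one_mul]
    _ ≤ ∑ i, x i * z i := Finset.sum_le_sum fun i _ => mul_le_mul_of_nonneg_left (hz i) (hx.1 i)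
    _ = x ⬝ᵥ z := rfl

lemma alternative {m n : ℕ} (hn : 0 < n) (B : Matrix (Fin m) (Fin n) ℝ) :
    (∃ y ∈ stdSimplex ℝ (Fin n), ∀ i, B.mulVec y i ≤ 0) ∨
    (∃ x ∈ stdSimplex ℝ (Fin m), ∀ j, 0 < vecMul x B j) := by
  by_cases h : ∃ y ∈ stdSimplex ℝ (Fin n), ∀ i, B.mulVec y i ≤ 0
  · exact Or.inl h
  right
  set K : Set (Fin m → ℝ) := B.mulVec '' stdSimplex ℝ (Fin n) with hK
  set C : Set (Fin m → ℝ) := {z | ∀ i, z i ≤ 0} with hCdef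
  have hKconv : Convex ℝ K := (convex_stdSimplex ℝ (Fin n)).linear_image B.mulVecLin
  have hKcomp : IsCompact K :=
    (isCompact_stdSimplex ℝ (Fin n)).image B.mulVecLin.continuous_of_finiteDimensional
  have hCconv : Convex ℝ C := by
    intro a ha b hb s t hs ht hst
    intro i
    have := add_nonpos (mul_nonpos_of_nonneg_of_nonpos hs (ha i))
      (mul_nonpos_of_nonneg_of_nonpos ht (hb i))
    simpa using this
  have hCclosed : IsClosed C := by
    have : C = ⋂ i, {z : Fin m → ℝ | z i ≤ 0} := by ext z; simp [hCdef]
    rw [this]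
    exact isClosed_iInter fun i => isClosed_le (continuous_apply i) continuous_const
  have hdisj : Disjoint K C := by
    rw [Set.disjoint_left]
    rintro z ⟨y, hy, rfl⟩ hz
    exact h ⟨y, hy, hz⟩
  obtain ⟨f, u, v, hfK, huv, hfC⟩ :=
    geometric_hahn_banach_compact_closed hKconv hKcomp hCconv hCclosed hdisj
  have hv0 : v < 0 := by
    have := hfC 0 (fun i => le_refl 0)
    simpa using this
  set c : Fin m → ℝ := fun i => f (Pi.single i 1) with hc
  have hf_eq : ∀ z : Fin m → ℝ, f z = ∑ i, z i * c i := by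
    intro z
    have hz : z = ∑ i, z i • (Pi.single i (1:ℝ) : Fin m → ℝ) := by
      funext j
      simp [Finset.sum_apply, Pi.single_apply]
    conv_lhs => rw [hz]
    rw [map_sum]
    simp [hc, smul_eq_mul]
  have hcnonpos : ∀ i, c i ≤ 0 := by
    intro i
    by_contra hpos
    push_neg at hpos
    have hmem : (v / c i) • (Pi.single i (1:ℝ) : Fin m → ℝ) ∈ C := by
      intro k
      have hvc : v / c i ≤ 0 := div_nonpos_of_nonpos_of_nonneg hv0.le hpos.le
      by_cases hk : k = i
      · subst hk; simpa using hvc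
      · simp [Pi.single_apply, hk]
    have h2 := hfC _ hmem
    rw [f.map_smul] at h2
    have h3 : v < (v / c i) * c i := h2
    rw [div_mul_cancel₀ _ (ne_of_gt hpos)] at h3
    linarith
  -- columns of B are in K
  have hcol : ∀ j, f (B.mulVec (Pi.single j 1)) < 0 := fun j =>
    lt_trans (lt_trans (hfK _ ⟨Pi.single j 1, single_mem_stdSimplex ℝ j, rfl⟩) huv) hv0
  set s : ℝ := ∑ i, -c i with hs
  have hsnn : 0 ≤ s := Finset.sum_nonneg fun i _ => neg_nonneg.2 (hcnonpos i)
  have hspos : 0 < s := by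
    rcases lt_or_eq_of_le hsnn with h' | h'
    · exact h'
    exfalso
    have hzero : ∀ i, c i = 0 := by
      intro i
      have := (Finset.sum_eq_zero_iff_of_nonneg
        (fun i _ => neg_nonneg.2 (hcnonpos i))).1 h'.symm i (Finset.mem_univ i)
      linarith
    obtain ⟨j⟩ := Fin.pos_iff_nonempty.1 hn
    have := hcol j
    rw [hf_eq] at this
    simp [hzero] at this
  refine ⟨fun i => -c i / s, ⟨fun i => div_nonneg (neg_nonneg.2 (hcnonpos i)) hsnn, ?_⟩, ?_⟩
  · rw [← Finset.sum_div, ← hs, div_self (ne_of_gt hspos)]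
  · intro j
    have hlt := hcol j
    rw [hf_eq] at hlt
    have hmv : ∀ i, B.mulVec (Pi.single j 1) i = B i j := by
      intro i; rw [mulVec_single]; simp
    simp only [hmv] at hlt
    show 0 < vecMul (fun i => -c i / s) B j
    have heq : vecMul (fun i => -c i / s) B j = (∑ i, -(B i j * c i)) / s := by
      simp only [vecMul, dotProduct, Finset.sum_div]
      exact Finset.sum_congr rfl fun i _ => by ring
    rw [heq]
    apply div_pos _ hspos
    have : ∑ i, -(B i j * c i) = -(∑ i, B i j * c i) := by
      simp [Finset.sum_neg_distrib]
    rw [this]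
    linarith

/-- The payoff `xᵀ A y` of the zero-sum matrix game `A` under mixed strategies `x`, `y`. -/
noncomputable def payoff {m n : ℕ} (A : Matrix (Fin m) (Fin n) ℝ)
    (x : Fin m → ℝ) (y : Fin n → ℝ) : ℝ := x ⬝ᵥ A.mulVec y

/-- Von Neumann's minimax theorem: every real matrix game has an optimal
(saddle-point) pair of mixed strategies. -/
theorem matrix_game_has_optimal_pair {m n : ℕ} (hm : 0 < m) (hn : 0 < n)
    (A : Matrix (Fin m) (Fin n) ℝ) :
    ∃ x0 ∈ stdSimplex ℝ (Fin m), ∃ y0 ∈ stdSimplex ℝ (Fin n),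
      (∀ x ∈ stdSimplex ℝ (Fin m), payoff A x y0 ≤ payoff A x0 y0) ∧
      (∀ y ∈ stdSimplex ℝ (Fin n), payoff A x0 y0 ≤ payoff A x0 y) := by
  have hmne : (Finset.univ : Finset (Fin m)).Nonempty := ⟨⟨0, hm⟩, Finset.mem_univ _⟩
  have hnne : (Finset.univ : Finset (Fin n)).Nonempty := ⟨⟨0, hn⟩, Finset.mem_univ _⟩
  set g : (Fin m → ℝ) → ℝ := fun x => Finset.univ.inf' hnne (fun j => vecMul x A j) with hg
  set F : (Fin n → ℝ) → ℝ := fun y => Finset.univ.sup' hmne (fun i => A.mulVec y i) with hF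
  have hvm : ∀ j, Continuous fun x : Fin m → ℝ => vecMul x A j := by
    intro j
    simp only [vecMul, dotProduct]
    exact continuous_finset_sum _ fun i _ => (continuous_apply i).mul continuous_const
  have hmv : ∀ i, Continuous fun y : Fin n → ℝ => A.mulVec y i := by
    intro i
    simp only [mulVec, dotProduct]
    exact continuous_finset_sum _ fun j _ => continuous_const.mul (continuous_apply j)
  have hgc : Continuous g := Continuous.finset_inf'_apply hnne fun j _ => hvm j
  have hFc : Continuous F := Continuous.finset_sup'_apply hmne fun i _ => hmv i
  obtain ⟨x0, hx0mem, hx0max⟩ := (isCompact_stdSimplex ℝ (Fin m)).exists_isMaxOn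
    ⟨_, single_mem_stdSimplex ℝ ⟨0, hm⟩⟩ hgc.continuousOn
  obtain ⟨y0, hy0mem, hy0min⟩ := (isCompact_stdSimplex ℝ (Fin n)).exists_isMinOn
    ⟨_, single_mem_stdSimplex ℝ ⟨0, hn⟩⟩ hFc.continuousOn
  have key : F y0 ≤ g x0 := by
    by_contra hlt
    push_neg at hlt
    set lam : ℝ := (g x0 + F y0) / 2 with hlam
    have h1 : g x0 < lam := by rw [hlam]; linarith
    have h2 : lam < F y0 := by rw [hlam]; linarith
    set B : Matrix (Fin m) (Fin n) ℝ := Matrix.of fun i j => A i j - lam with hB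
    rcases alternative hn B with ⟨y, hy, hle⟩ | ⟨x, hx, hgt⟩
    · have hAy : ∀ i, A.mulVec y i ≤ lam := by
        intro i
        have hBy : B.mulVec y i = A.mulVec y i - lam := by
          simp only [mulVec, dotProduct, hB, Matrix.of_apply, sub_mul]
          rw [Finset.sum_sub_distrib, ← Finset.mul_sum, hy.2, mul_one]
        have := hle i
        rw [hBy] at this
        linarith
      have hFy : F y ≤ lam := Finset.sup'_le _ _ fun i _ => hAy i
      have := hy0min hy
      simp only [Set.mem_setOf_eq] at this
      exact absurd (lt_of_le_of_lt (le_trans this hFy) h2) (lt_irrefl _)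
    · have hxA : ∀ j, lam < vecMul x A j := by
        intro j
        have hBx : vecMul x B j = vecMul x A j - lam := by
          simp only [vecMul, dotProduct, hB, Matrix.of_apply, mul_sub]
          rw [Finset.sum_sub_distrib, ← Finset.sum_mul, hx.2, one_mul]
        have := hgt j
        rw [hBx] at this
        linarith
      have hgx : lam ≤ g x := Finset.le_inf' _ _ fun j _ => (hxA j).le
      have := hx0max hx
      simp only [Set.mem_setOf_eq] at this
      exact absurd (lt_of_le_of_lt (le_trans hgx this) h1) (lt_irrefl _)
  -- now g x0 is the value v; A.mulVec y0 i ≤ F y0 ≤ g x0 ≤ vecMul x0 A j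
  have hrow : ∀ j, g x0 ≤ vecMul x0 A j := fun j => Finset.inf'_le _ (Finset.mem_univ j)
  have hcol : ∀ i, A.mulVec y0 i ≤ g x0 := fun i =>
    le_trans (Finset.le_sup' _ (Finset.mem_univ i)) key
  have hmid_ge : g x0 ≤ payoff A x0 y0 := by
    rw [payoff, dotProduct_mulVec, dotProduct_comm]
    exact le_dot hy0mem hrow
  have hmid_le : payoff A x0 y0 ≤ g x0 := dot_le hx0mem hcol
  refine ⟨x0, hx0mem, y0, hy0mem, ?_, ?_⟩
  · intro x hx
    have : payoff A x y0 ≤ g x0 := dot_le hx hcol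
    linarith
  · intro y hy
    have : g x0 ≤ payoff A x0 y := by
      rw [payoff, dotProduct_mulVec, dotProduct_comm]
      exact le_dot hy hrow
    linarith
end

section
/- Let F be a subfield of ℝ and let A be an m×n real matrix all of whose entries lie in F. Then the value val(A) = max_{x ∈ Δ_m} min_{y ∈ Δ_n} xᵀ A y lies in F, and moreover there exists an optimal strategy pair (x⁰, y⁰) for the game A all of whose entries lie in F. -/
open Matrix Finset

lemma sum_mul_le_of_mem_stdSimplex {k : ℕ} {w c : Fin k → ℝ} (hw : w ∈ stdSimplex ℝ (Fin k))
    {v : ℝ} (h : ∀ j, c j ≤ v) : ∑ j, w j * c j ≤ v := by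
  calc ∑ j, w j * c j ≤ ∑ j, w j * v :=
        Finset.sum_le_sum fun j _ => mul_le_mul_of_nonneg_left (h j) (hw.1 j)
    _ = v := by rw [← Finset.sum_mul, hw.2, one_mul]

lemma le_sum_mul_of_mem_stdSimplex {k : ℕ} {w c : Fin k → ℝ} (hw : w ∈ stdSimplex ℝ (Fin k))
    {v : ℝ} (h : ∀ j, v ≤ c j) : v ≤ ∑ j, w j * c j := by
  calc v = ∑ j, w j * v := by rw [← Finset.sum_mul, hw.2, one_mul]
    _ ≤ ∑ j, w j * c j :=
        Finset.sum_le_sum fun j _ => mul_le_mul_of_nonneg_left (h j) (hw.1 j)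

lemma matrix_alternative {m n : ℕ} (hm : 0 < m) (hn : 0 < n) (A : Matrix (Fin m) (Fin n) ℝ) :
    (∃ y ∈ stdSimplex ℝ (Fin n), ∀ i, A.mulVec y i ≤ 0) ∨
    (∃ x ∈ stdSimplex ℝ (Fin m), ∀ j, 0 < vecMul x A j) := by
  classical
  set p : Fin n ⊕ Fin m → (Fin m → ℝ) :=
    Sum.elim (fun j => fun i => A i j) (fun i => Pi.single i 1) with hp
  let T : (Fin n ⊕ Fin m → ℝ) →ₗ[ℝ] (Fin m → ℝ) :=
    { toFun := fun w => ∑ k, w k • p k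
      map_add' := by intro a b; simp [add_smul, Finset.sum_add_distrib]
      map_smul' := by intro c a; simp [smul_smul, Finset.smul_sum] }
  have hTapp : ∀ (w : Fin n ⊕ Fin m → ℝ) (i : Fin m), T w i = ∑ k, w k * p k i := by
    intro w i
    show (∑ k, w k • p k) i = _
    rw [Finset.sum_apply]
    simp
  set C : Set (Fin m → ℝ) := T '' stdSimplex ℝ (Fin n ⊕ Fin m) with hC
  have hCconv : Convex ℝ C := (convex_stdSimplex ℝ _).linear_image T
  have hTcont : Continuous T := LinearMap.continuous_of_finiteDimensional T
  have hCcomp : IsCompact C := (isCompact_stdSimplex ℝ _).image hTcont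
  have hpC : ∀ k, p k ∈ C := by
    intro k
    refine ⟨Pi.single k 1, single_mem_stdSimplex ℝ k, ?_⟩
    show (∑ k', Pi.single k 1 k' • p k') = p k
    rw [Finset.sum_eq_single k]
    · simp
    · intro b _ hb; simp [Pi.single_apply, hb]
    · simp
  by_cases h0 : (0 : Fin m → ℝ) ∈ C
  · left
    obtain ⟨w, hw, hw0⟩ := h0
    have key : ∀ i, (∑ j, w (Sum.inl j) * A i j) + w (Sum.inr i) = 0 := by
      intro i
      have := congrFun hw0 i
      rw [hTapp] at this
      rw [Fintype.sum_sum_type] at this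
      simpa [hp, Pi.single_apply] using this
    set t : ℝ := ∑ j, w (Sum.inl j) with ht
    have htpos : 0 < t := by
      rcases lt_or_eq_of_le (Finset.sum_nonneg fun j _ => hw.1 (Sum.inl j)) with h | h
      · exact h
      · exfalso
        have hz : ∀ j, w (Sum.inl j) = 0 := by
          intro j
          have := (Finset.sum_eq_zero_iff_of_nonneg fun j _ => hw.1 (Sum.inl j)).mp h.symm
          exact this j (Finset.mem_univ j)
        have hz2 : ∀ i, w (Sum.inr i) = 0 := by
          intro i
          have := key i
          simp [hz] at this
          exact this
        have := hw.2
        rw [Fintype.sum_sum_type] at this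
        simp [hz, hz2] at this
    refine ⟨fun j => w (Sum.inl j) / t, ⟨fun j => div_nonneg (hw.1 _) htpos.le, ?_⟩, ?_⟩
    · rw [← Finset.sum_div, ← ht, div_self htpos.ne']
    · intro i
      have : A.mulVec (fun j => w (Sum.inl j) / t) i = (∑ j, w (Sum.inl j) * A i j) / t := by
        simp only [mulVec, dotProduct]
        rw [Finset.sum_div]
        congr 1; ext j; ring
      rw [this]
      have : (∑ j, w (Sum.inl j) * A i j) = -w (Sum.inr i) := by linarith [key i]
      rw [this]
      exact div_nonpos_of_nonpos_of_nonneg (by linarith [hw.1 (Sum.inr i)]) htpos.le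
  · right
    obtain ⟨f, u, hu0, hfc⟩ := geometric_hahn_banach_point_closed hCconv hCcomp.isClosed h0
    rw [map_zero] at hu0
    set ξ : Fin m → ℝ := fun i => f (Pi.single i 1) with hξ
    have hξpos : ∀ i, 0 < ξ i := fun i => lt_trans hu0 (hfc _ (hpC (Sum.inr i)))
    have hfeq : ∀ c : Fin m → ℝ, f c = ∑ i, c i * ξ i := by
      intro c
      conv_lhs => rw [show c = ∑ i, Pi.single i (c i) from (Finset.univ_sum_single c).symm]
      rw [map_sum]
      congr 1; ext i
      rw [show (c i : ℝ) = c i • (1:ℝ) by simp, Pi.single_smul, _root_.map_smul]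
      simp [hξ, smul_eq_mul]
    have hcol : ∀ j, 0 < ∑ i, A i j * ξ i := by
      intro j
      have := lt_trans hu0 (hfc _ (hpC (Sum.inl j)))
      rwa [hfeq] at this
    haveI : Nonempty (Fin m) := Fin.pos_iff_nonempty.mp hm
    set s : ℝ := ∑ i, ξ i with hs
    have hspos : 0 < s := Finset.sum_pos (fun i _ => hξpos i) Finset.univ_nonempty
    refine ⟨fun i => ξ i / s, ⟨fun i => div_nonneg (hξpos i).le hspos.le, ?_⟩, ?_⟩
    · rw [← Finset.sum_div, ← hs, div_self hspos.ne']
    · intro j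
      have : vecMul (fun i => ξ i / s) A j = (∑ i, A i j * ξ i) / s := by
        simp only [vecMul, dotProduct]
        rw [Finset.sum_div]
        congr 1; ext i; ring
      rw [this]
      exact div_pos (hcol j) hspos

lemma continuous_finset_inf'' {ι X : Type*} [TopologicalSpace X] {s : Finset ι}
    (hs : s.Nonempty) {f : ι → X → ℝ} (hf : ∀ i, Continuous (f i)) :
    Continuous fun x => s.inf' hs fun i => f i x := by
  induction hs using Finset.Nonempty.cons_induction with
  | singleton a => simpa using hf a
  | cons a s h hs ih =>
      have he : (fun x => (Finset.cons a s h).inf' (Finset.cons_nonempty h) fun i => f i x)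
          = fun x => min (f a x) (s.inf' hs fun i => f i x) := by
        funext x
        rw [Finset.inf'_cons]
      rw [he]
      exact (hf a).min ih

lemma continuous_finset_sup'' {ι X : Type*} [TopologicalSpace X] {s : Finset ι}
    (hs : s.Nonempty) {f : ι → X → ℝ} (hf : ∀ i, Continuous (f i)) :
    Continuous fun x => s.sup' hs fun i => f i x := by
  induction hs using Finset.Nonempty.cons_induction with
  | singleton a => simpa using hf a
  | cons a s h hs ih =>
      have he : (fun x => (Finset.cons a s h).sup' (Finset.cons_nonempty h) fun i => f i x)
          = fun x => max (f a x) (s.sup' hs fun i => f i x) := by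
        funext x
        rw [Finset.sup'_cons]
      rw [he]
      exact (hf a).max ih

lemma exists_saddle {m n : ℕ} (hm : 0 < m) (hn : 0 < n) (A : Matrix (Fin m) (Fin n) ℝ) :
    ∃ x0 ∈ stdSimplex ℝ (Fin m), ∃ y0 ∈ stdSimplex ℝ (Fin n), ∃ v : ℝ,
      (∀ j, v ≤ vecMul x0 A j) ∧ (∀ i, A.mulVec y0 i ≤ v) := by
  classical
  haveI : Nonempty (Fin m) := Fin.pos_iff_nonempty.mp hm
  haveI : Nonempty (Fin n) := Fin.pos_iff_nonempty.mp hn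
  set g : (Fin m → ℝ) → ℝ :=
    fun x => Finset.univ.inf' Finset.univ_nonempty (fun j => vecMul x A j) with hg
  set h : (Fin n → ℝ) → ℝ :=
    fun y => Finset.univ.sup' Finset.univ_nonempty (fun i => A.mulVec y i) with hh
  have hgcont : Continuous g := by
    apply continuous_finset_inf''
    intro j
    show Continuous fun x : Fin m → ℝ => ∑ i, x i * A i j
    exact continuous_finset_sum _ fun i _ => (continuous_apply i).mul continuous_const
  have hhcont : Continuous h := by
    apply continuous_finset_sup''
    intro i
    show Continuous fun y : Fin n → ℝ => ∑ j, A i j * y j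
    exact continuous_finset_sum _ fun j _ => continuous_const.mul (continuous_apply j)
  have hne_m : (stdSimplex ℝ (Fin m)).Nonempty :=
    ⟨_, single_mem_stdSimplex ℝ (Classical.arbitrary _)⟩
  have hne_n : (stdSimplex ℝ (Fin n)).Nonempty :=
    ⟨_, single_mem_stdSimplex ℝ (Classical.arbitrary _)⟩
  obtain ⟨x0, hx0, hx0max⟩ :=
    (isCompact_stdSimplex ℝ (Fin m)).exists_isMaxOn hne_m hgcont.continuousOn
  obtain ⟨y0, hy0, hy0min⟩ :=
    (isCompact_stdSimplex ℝ (Fin n)).exists_isMinOn hne_n hhcont.continuousOn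
  set v1 := g x0 with hv1
  set v2 := h y0 with hv2
  have pay : x0 ⬝ᵥ A.mulVec y0 = ∑ j, y0 j * vecMul x0 A j := by
    rw [Matrix.dotProduct_mulVec]
    simp only [dotProduct]
    congr 1; ext j; ring
  have hv12 : v1 ≤ v2 := by
    have h1 : v1 ≤ x0 ⬝ᵥ A.mulVec y0 := by
      rw [pay]
      exact le_sum_mul_of_mem_stdSimplex hy0 fun j => Finset.inf'_le _ (Finset.mem_univ j)
    have h2 : x0 ⬝ᵥ A.mulVec y0 ≤ v2 := by
      show ∑ i, x0 i * A.mulVec y0 i ≤ v2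
      exact sum_mul_le_of_mem_stdSimplex hx0 fun i => Finset.le_sup' _ (Finset.mem_univ i)
    linarith
  have heq : v1 = v2 := by
    by_contra hne
    have hlt : v1 < v2 := lt_of_le_of_ne hv12 hne
    set v := (v1 + v2) / 2 with hv
    rcases matrix_alternative hm hn (Matrix.of fun i j => A i j - v) with
      ⟨y, hy, hyle⟩ | ⟨x, hx, hxgt⟩
    · have hAy : ∀ i, A.mulVec y i ≤ v := by
        intro i
        have h1 := hyle i
        have h2 : (Matrix.of fun i j => A i j - v).mulVec y i = A.mulVec y i - v := by
          simp only [mulVec, dotProduct, Matrix.of_apply, sub_mul]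
          rw [Finset.sum_sub_distrib, ← Finset.mul_sum, hy.2, mul_one]
        rw [h2] at h1
        linarith
      have : v2 ≤ v := le_trans (hy0min hy) (Finset.sup'_le _ _ fun i _ => hAy i)
      rw [hv] at this; linarith
    · have hxA : ∀ j, v < vecMul x A j := by
        intro j
        have h1 := hxgt j
        have h2 : vecMul x (Matrix.of fun i j => A i j - v) j = vecMul x A j - v := by
          simp only [vecMul, dotProduct, Matrix.of_apply, mul_sub]
          rw [Finset.sum_sub_distrib, ← Finset.sum_mul, hx.2, one_mul]
        rw [h2] at h1
        linarith
      have : v < g x := by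
        rw [hg]
        rw [Finset.lt_inf'_iff]
        exact fun j _ => hxA j
      have hxle : g x ≤ v1 := hx0max hx
      rw [hv] at this; linarith
  refine ⟨x0, hx0, y0, hy0, v1, fun j => Finset.inf'_le _ (Finset.mem_univ j), fun i => ?_⟩
  rw [heq]
  exact Finset.le_sup' _ (Finset.mem_univ i)


lemma fourier_motzkin (F : Subfield ℝ) :
    ∀ (k : ℕ) (ι : Type) [Fintype ι] (C : ι → Fin k → ℝ) (d : ι → ℝ),
      (∀ t i, C t i ∈ F) → (∀ t, d t ∈ F) →
      (∃ x : Fin k → ℝ, ∀ t, 0 ≤ ∑ i, C t i * x i + d t) →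
      ∃ x : Fin k → ℝ, (∀ i, x i ∈ F) ∧ ∀ t, 0 ≤ ∑ i, C t i * x i + d t := by
  intro k
  induction k with
  | zero =>
      rintro ι _ C d hC hd ⟨x, hx⟩
      exact ⟨fun _ => 0, fun i => i.elim0, fun t => by simpa using hx t⟩
  | succ k ih =>
      rintro ι _ C d hC hd ⟨x, hx⟩
      classical
      set a : ι → ℝ := fun t => C t (Fin.last k) with ha
      set M : ι → (Fin k → ℝ) → ℝ := fun t x' => (∑ i, C t i.castSucc * x' i) + d t with hM
      have hsplit : ∀ (t : ι) (z : Fin (k+1) → ℝ),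
          (∑ i, C t i * z i) + d t = a t * z (Fin.last k) + M t (fun i => z i.castSucc) := by
        intro t z
        rw [hM, Fin.sum_univ_castSucc (f := fun i => C t i * z i)]
        simp only [ha]
        ring
      have hMF : ∀ (t : ι) (x' : Fin k → ℝ), (∀ i, x' i ∈ F) → M t x' ∈ F := by
        intro t x' hx'
        exact F.add_mem (Subfield.sum_mem F fun i _ => F.mul_mem (hC t _) (hx' i)) (hd t)
      -- eliminated system
      set P := {t : ι // 0 < a t}
      set N := {t : ι // a t < 0}
      set Z := {t : ι // a t = 0}
      set ι' := Z ⊕ (P × N) with hι'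
      set C' : ι' → Fin k → ℝ := Sum.elim
        (fun z => fun i => C z.1 i.castSucc)
        (fun pq => fun i => a pq.1.1 * C pq.2.1 i.castSucc - a pq.2.1 * C pq.1.1 i.castSucc)
        with hC'
      set d' : ι' → ℝ := Sum.elim (fun z => d z.1)
        (fun pq => a pq.1.1 * d pq.2.1 - a pq.2.1 * d pq.1.1) with hd'
      have expand : ∀ (p q : ι) (x' : Fin k → ℝ),
          (∑ i, (a p * C q i.castSucc - a q * C p i.castSucc) * x' i)
            + (a p * d q - a q * d p) = a p * M q x' - a q * M p x' := by
        intro p q x'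
        rw [show (∑ i, (a p * C q i.castSucc - a q * C p i.castSucc) * x' i)
              = a p * ∑ i, C q i.castSucc * x' i - a q * ∑ i, C p i.castSucc * x' i by
          rw [Finset.mul_sum, Finset.mul_sum, ← Finset.sum_sub_distrib]
          exact Finset.sum_congr rfl fun i _ => by ring]
        rw [hM]
        ring
      have hsol' : ∃ x' : Fin k → ℝ, ∀ t' : ι', 0 ≤ (∑ i, C' t' i * x' i) + d' t' := by
        refine ⟨fun i => x i.castSucc, ?_⟩
        rintro (⟨t, ht⟩ | ⟨⟨p, hp⟩, ⟨q, hq⟩⟩)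
        · have := hx t
          rw [hsplit t x, ht, zero_mul, zero_add] at this
          simpa [hC', hd', hM] using this
        · have h1 := hx p
          have h2 := hx q
          rw [hsplit p x] at h1
          rw [hsplit q x] at h2
          have e1 : 0 ≤ a p * (a q * x (Fin.last k) + M q fun i => x i.castSucc) :=
            mul_nonneg hp.le h2
          have e2 : 0 ≤ (-a q) * (a p * x (Fin.last k) + M p fun i => x i.castSucc) :=
            mul_nonneg (by linarith) h1
          simp only [hC', hd', Sum.elim_inr]
          rw [expand]
          nlinarith [e1, e2]
      obtain ⟨x'', hx''F, hx''⟩ := ih ι' C' d'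
        (by
          rintro (⟨t, ht⟩ | ⟨⟨p, hp⟩, ⟨q, hq⟩⟩) i
          · exact hC t _
          · exact F.sub_mem (F.mul_mem (hC p _) (hC q _)) (F.mul_mem (hC q _) (hC p _)))
        (by
          rintro (⟨t, ht⟩ | ⟨⟨p, hp⟩, ⟨q, hq⟩⟩)
          · exact hd t
          · exact F.sub_mem (F.mul_mem (hC p _) (hd q)) (F.mul_mem (hC q _) (hd p)))
        hsol'
      -- the eliminated inequalities, instantiated
      have hZ : ∀ t : ι, a t = 0 → 0 ≤ M t x'' := by
        intro t ht
        have := hx'' (Sum.inl ⟨t, ht⟩)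
        simpa [hC', hd', hM] using this
      have hPN : ∀ (p : P) (q : N), -M p.1 x'' / a p.1 ≤ -M q.1 x'' / a q.1 := by
        rintro ⟨p, hp⟩ ⟨q, hq⟩
        have h0 := hx'' (Sum.inr (⟨p, hp⟩, ⟨q, hq⟩))
        simp only [hC', hd', Sum.elim_inr] at h0
        rw [expand] at h0
        rw [show -M q x'' / a q = M q x'' / (-a q) by rw [div_neg, neg_div]]
        rw [div_le_div_iff₀ hp (by linarith)]
        nlinarith [h0]
      -- choose the last coordinate
      have key : ∃ xl : ℝ, xl ∈ F ∧ ∀ t : ι, 0 ≤ a t * xl + M t x'' := by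
        by_cases hP : Nonempty P
        · haveI := hP
          refine ⟨Finset.univ.sup' Finset.univ_nonempty (fun p : P => -M p.1 x'' / a p.1), ?_, ?_⟩
          · obtain ⟨p, _, hps⟩ := Finset.exists_mem_eq_sup' Finset.univ_nonempty
              (fun p : P => -M p.1 x'' / a p.1)
            rw [hps]
            exact F.div_mem (F.neg_mem (hMF _ _ hx''F)) (hC _ _)
          · intro t
            rcases lt_trichotomy (a t) 0 with ht | ht | ht
            · have hle : Finset.univ.sup' Finset.univ_nonempty (fun p : P => -M p.1 x'' / a p.1)
                  ≤ -M t x'' / a t :=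
                Finset.sup'_le _ _ fun p _ => hPN p ⟨t, ht⟩
              have h2 := mul_le_mul_of_nonpos_left hle ht.le
              have h3 : a t * (-M t x'' / a t) = -M t x'' := by
                rw [mul_comm, div_mul_cancel₀ _ ht.ne]
              linarith
            · rw [ht]
              simpa using hZ t ht
            · have hle : -M t x'' / a t
                  ≤ Finset.univ.sup' Finset.univ_nonempty (fun p : P => -M p.1 x'' / a p.1) :=
                Finset.le_sup' (fun p : P => -M p.1 x'' / a p.1)
                  (Finset.mem_univ (⟨t, ht⟩ : P))
              rw [div_le_iff₀ ht] at hle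
              nlinarith [hle]
        · by_cases hN : Nonempty N
          · haveI := hN
            refine ⟨Finset.univ.inf' Finset.univ_nonempty (fun q : N => -M q.1 x'' / a q.1), ?_, ?_⟩
            · obtain ⟨q, _, hqs⟩ := Finset.exists_mem_eq_inf' Finset.univ_nonempty
                (fun q : N => -M q.1 x'' / a q.1)
              rw [hqs]
              exact F.div_mem (F.neg_mem (hMF _ _ hx''F)) (hC _ _)
            · intro t
              rcases lt_trichotomy (a t) 0 with ht | ht | ht
              · have hle : Finset.univ.inf' Finset.univ_nonempty (fun q : N => -M q.1 x'' / a q.1)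
                    ≤ -M t x'' / a t :=
                  Finset.inf'_le _ (Finset.mem_univ (⟨t, ht⟩ : N))
                have h2 := mul_le_mul_of_nonpos_left hle ht.le
                have h3 : a t * (-M t x'' / a t) = -M t x'' := by
                  rw [mul_comm, div_mul_cancel₀ _ ht.ne]
                linarith
              · rw [ht]
                simpa using hZ t ht
              · exact absurd ⟨⟨t, ht⟩⟩ hP
          · refine ⟨0, F.zero_mem, ?_⟩
            intro t
            rcases lt_trichotomy (a t) 0 with ht | ht | ht
            · exact absurd ⟨⟨t, ht⟩⟩ hN
            · rw [ht]
              simpa using hZ t ht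
            · exact absurd ⟨⟨t, ht⟩⟩ hP
      obtain ⟨xl, hxlF, hxl⟩ := key
      refine ⟨Fin.snoc x'' xl, ?_, ?_⟩
      · intro i
        refine Fin.lastCases ?_ ?_ i
        · rw [Fin.snoc_last]; exact hxlF
        · intro j
          rw [Fin.snoc_castSucc]
          exact hx''F j
      · intro t
        rw [hsplit t (Fin.snoc x'' xl), Fin.snoc_last]
        have : (fun i : Fin k => (Fin.snoc x'' xl : Fin (k+1) → ℝ) (Fin.castSucc i)) = x'' := by
          funext i; rw [Fin.snoc_castSucc]
        rw [this]
        exact hxl t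

/-- Pack strategies and a value into a single vector of variables. -/
noncomputable def packVec {m n : ℕ} (u : Fin m → ℝ) (w : Fin n → ℝ) (c : ℝ) :
    Fin (m + n + 1) → ℝ := Fin.snoc (Fin.append u w) c

lemma packVec_dot {m n : ℕ} (u u' : Fin m → ℝ) (w w' : Fin n → ℝ) (c c' : ℝ) :
    ∑ l, packVec u w c l * packVec u' w' c' l
      = (∑ i, u i * u' i) + (∑ j, w j * w' j) + c * c' := by
  rw [Fin.sum_univ_castSucc (f := fun l => packVec u w c l * packVec u' w' c' l)]
  simp only [packVec, Fin.snoc_castSucc, Fin.snoc_last]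
  rw [Fin.sum_univ_add (f := fun l => Fin.append u w l * Fin.append u' w' l)]
  simp only [Fin.append_left, Fin.append_right]

lemma packVec_mem {m n : ℕ} (F : Subfield ℝ) {u : Fin m → ℝ} {w : Fin n → ℝ} {c : ℝ}
    (hu : ∀ i, u i ∈ F) (hw : ∀ j, w j ∈ F) (hc : c ∈ F) : ∀ l, packVec u w c l ∈ F := by
  intro l
  refine Fin.lastCases ?_ ?_ l
  · rw [packVec, Fin.snoc_last]; exact hc
  · intro i
    rw [packVec, Fin.snoc_castSucc]
    refine Fin.addCases (fun i0 => ?_) (fun j0 => ?_) i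
    · rw [Fin.append_left]; exact hu i0
    · rw [Fin.append_right]; exact hw j0

lemma unpackVec {m n : ℕ} (z : Fin (m + n + 1) → ℝ) :
    z = packVec (fun i => z ((Fin.castAdd n i).castSucc))
        (fun j => z ((Fin.natAdd m j).castSucc)) (z (Fin.last (m + n))) := by
  funext l
  refine Fin.lastCases ?_ ?_ l
  · rw [packVec, Fin.snoc_last]
  · intro i
    rw [packVec, Fin.snoc_castSucc]
    refine Fin.addCases (fun i0 => ?_) (fun j0 => ?_) i
    · rw [Fin.append_left]
    · rw [Fin.append_right]

lemma single_dot {k : ℕ} (i : Fin k) (g : Fin k → ℝ) :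
    ∑ i', (Pi.single i 1 : Fin k → ℝ) i' * g i' = g i := by
  classical
  rw [Finset.sum_eq_single i]
  · simp
  · intro b _ hb; simp [Pi.single_apply, hb]
  · simp

/-- The value `val(A) = max_{x ∈ Δ_m} min_{y ∈ Δ_n} xᵀ A y` of the matrix game `A`. -/
noncomputable def matrixVal {m n : ℕ} (A : Matrix (Fin m) (Fin n) ℝ) : ℝ :=
  ⨆ x : stdSimplex ℝ (Fin m), ⨅ y : stdSimplex ℝ (Fin n), payoff A x.1 y.1

lemma payoff_eq_sum_left {m n : ℕ} (A : Matrix (Fin m) (Fin n) ℝ) (x : Fin m → ℝ)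
    (y : Fin n → ℝ) : payoff A x y = ∑ i, x i * A.mulVec y i := rfl

lemma payoff_eq_sum_right {m n : ℕ} (A : Matrix (Fin m) (Fin n) ℝ) (x : Fin m → ℝ)
    (y : Fin n → ℝ) : payoff A x y = ∑ j, y j * vecMul x A j := by
  rw [payoff, Matrix.dotProduct_mulVec]
  simp only [dotProduct]
  exact Finset.sum_congr rfl fun j _ => by ring

/-- Weyl's ordered field property: if all entries of a matrix game lie in a subfield `F`
of `ℝ`, then the value lies in `F` and there is an optimal strategy pair with all
entries in `F`. -/
theorem matrix_game_ordered_field_property {m n : ℕ} (hm : 0 < m) (hn : 0 < n)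
    (F : Subfield ℝ) (A : Matrix (Fin m) (Fin n) ℝ) (hA : ∀ i j, A i j ∈ F) :
    matrixVal A ∈ F ∧
    ∃ x0 ∈ stdSimplex ℝ (Fin m), ∃ y0 ∈ stdSimplex ℝ (Fin n),
      (∀ x ∈ stdSimplex ℝ (Fin m), payoff A x y0 ≤ payoff A x0 y0) ∧
      (∀ y ∈ stdSimplex ℝ (Fin n), payoff A x0 y0 ≤ payoff A x0 y) ∧
      (∀ i, x0 i ∈ F) ∧ (∀ j, y0 j ∈ F) := by
  classical
  haveI : Nonempty (Fin m) := Fin.pos_iff_nonempty.mp hm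
  haveI : Nonempty (Fin n) := Fin.pos_iff_nonempty.mp hn
  -- the constraint system
  set ι : Type := Fin m ⊕ (Fin n ⊕ ((Fin n ⊕ Fin m) ⊕ (Bool ⊕ Bool))) with hι
  set Cc : ι → Fin (m + n + 1) → ℝ := Sum.elim
      (fun i => packVec (Pi.single i 1) 0 0)
      (Sum.elim (fun j => packVec 0 (Pi.single j 1) 0)
        (Sum.elim
          (Sum.elim (fun j => packVec (fun i => A i j) 0 (-1))
                    (fun i => packVec 0 (fun j => -A i j) 1))
          (Sum.elim (fun b => packVec (fun _ => if b then 1 else -1) 0 0)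
                    (fun b => packVec 0 (fun _ => if b then 1 else -1) 0)))) with hCc
  set dd : ι → ℝ := Sum.elim (fun _ => 0)
      (Sum.elim (fun _ => 0)
        (Sum.elim (Sum.elim (fun _ => 0) (fun _ => 0))
          (Sum.elim (fun b => if b then -1 else 1) (fun b => if b then -1 else 1)))) with hdd
  have hsingleF : ∀ (k : ℕ) (i i' : Fin k), (Pi.single i 1 : Fin k → ℝ) i' ∈ F := by
    intro k i i'
    rw [Pi.single_apply]
    split_ifs
    · exact F.one_mem
    · exact F.zero_mem
  have hCcF : ∀ t l, Cc t l ∈ F := by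
    rintro (i | j | (j | i) | (b | b)) l
    · exact packVec_mem F (hsingleF m i) (fun _ => F.zero_mem) F.zero_mem l
    · exact packVec_mem F (fun _ => F.zero_mem) (hsingleF n j) F.zero_mem l
    · exact packVec_mem F (fun i => hA i j) (fun _ => F.zero_mem) (F.neg_mem F.one_mem) l
    · exact packVec_mem F (fun _ => F.zero_mem) (fun j => F.neg_mem (hA i j)) F.one_mem l
    · refine packVec_mem F (fun _ => ?_) (fun _ => F.zero_mem) F.zero_mem l
      split_ifs
      exacts [F.one_mem, F.neg_mem F.one_mem]
    · refine packVec_mem F (fun _ => F.zero_mem) (fun _ => ?_) F.zero_mem l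
      split_ifs
      exacts [F.one_mem, F.neg_mem F.one_mem]
  have hddF : ∀ t, dd t ∈ F := by
    rintro (i | j | (j | i) | (b | b))
    · exact F.zero_mem
    · exact F.zero_mem
    · exact F.zero_mem
    · exact F.zero_mem
    · show (if b then (-1:ℝ) else 1) ∈ F
      split_ifs
      exacts [F.neg_mem F.one_mem, F.one_mem]
    · show (if b then (-1:ℝ) else 1) ∈ F
      split_ifs
      exacts [F.neg_mem F.one_mem, F.one_mem]
  obtain ⟨xs, hxs, ys, hys, v, hv1, hv2⟩ := exists_saddle hm hn A
  have hfeas : ∃ z : Fin (m+n+1) → ℝ, ∀ t, 0 ≤ ∑ l, Cc t l * z l + dd t := by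
    refine ⟨packVec xs ys v, ?_⟩
    have key : ∀ t, (0:ℝ) ≤ ∑ l, Cc t l * packVec xs ys v l + dd t := by
      rintro (i | j | (j | i) | (b | b))
      · show (0:ℝ) ≤ ∑ l, packVec (Pi.single i 1) 0 0 l * packVec xs ys v l + 0
        rw [packVec_dot, single_dot]
        simp only [Pi.zero_apply, zero_mul, Finset.sum_const_zero, add_zero, zero_mul]
        exact hxs.1 i
      · show (0:ℝ) ≤ ∑ l, packVec 0 (Pi.single j 1) 0 l * packVec xs ys v l + 0
        rw [packVec_dot, single_dot]
        simp only [Pi.zero_apply, zero_mul, Finset.sum_const_zero, add_zero, zero_add, zero_mul]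
        exact hys.1 j
      · show (0:ℝ) ≤ ∑ l, packVec (fun i => A i j) 0 (-1) l * packVec xs ys v l + 0
        rw [packVec_dot]
        simp only [Pi.zero_apply, zero_mul, Finset.sum_const_zero, add_zero, neg_one_mul,
          neg_mul]
        have e : vecMul xs A j = ∑ i, A i j * xs i := by
          simp only [vecMul, dotProduct]
          exact Finset.sum_congr rfl fun i _ => by ring
        have h1 := hv1 j
        rw [e] at h1
        linarith
      · show (0:ℝ) ≤ ∑ l, packVec 0 (fun j => -A i j) 1 l * packVec xs ys v l + 0
        rw [packVec_dot]
        simp only [Pi.zero_apply, zero_mul, Finset.sum_const_zero, neg_mul, zero_add, add_zero,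
          one_mul, Finset.sum_neg_distrib]
        have e : A.mulVec ys i = ∑ j, A i j * ys j := rfl
        have h1 := hv2 i
        rw [e] at h1
        linarith
      · cases b
        · show (0:ℝ) ≤ ∑ l, packVec (fun _ => (-1:ℝ)) 0 0 l * packVec xs ys v l + 1
          rw [packVec_dot]
          simp only [Pi.zero_apply, zero_mul, Finset.sum_const_zero, add_zero, neg_one_mul,
            Finset.sum_neg_distrib]
          have := hxs.2
          linarith
        · show (0:ℝ) ≤ ∑ l, packVec (fun _ => (1:ℝ)) 0 0 l * packVec xs ys v l + (-1)
          rw [packVec_dot]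
          simp only [Pi.zero_apply, zero_mul, Finset.sum_const_zero, add_zero, one_mul]
          have := hxs.2
          linarith
      · cases b
        · show (0:ℝ) ≤ ∑ l, packVec 0 (fun _ => (-1:ℝ)) 0 l * packVec xs ys v l + 1
          rw [packVec_dot]
          simp only [Pi.zero_apply, zero_mul, Finset.sum_const_zero, add_zero, zero_add,
            neg_one_mul, Finset.sum_neg_distrib]
          have := hys.2
          linarith
        · show (0:ℝ) ≤ ∑ l, packVec 0 (fun _ => (1:ℝ)) 0 l * packVec xs ys v l + (-1)
          rw [packVec_dot]
          simp only [Pi.zero_apply, zero_mul, Finset.sum_const_zero, add_zero, zero_add, one_mul]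
          have := hys.2
          linarith
    exact key
  obtain ⟨z, hzF, hz⟩ := fourier_motzkin F (m + n + 1) ι Cc dd hCcF hddF hfeas
  set x0 : Fin m → ℝ := fun i => z ((Fin.castAdd n i).castSucc) with hx0d
  set y0 : Fin n → ℝ := fun j => z ((Fin.natAdd m j).castSucc) with hy0d
  set v0 : ℝ := z (Fin.last (m + n)) with hv0d
  have hzu : z = packVec x0 y0 v0 := unpackVec z
  -- extract the individual inequalities
  have hx0nn : ∀ i, 0 ≤ x0 i := by
    intro i
    have h1 := hz (Sum.inl i)
    rw [hzu] at h1
    rw [show ∑ l, Cc (Sum.inl i) l * packVec x0 y0 v0 l + dd (Sum.inl i)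
        = ∑ l, packVec (Pi.single i 1) 0 0 l * packVec x0 y0 v0 l + 0 from rfl,
      packVec_dot, single_dot] at h1
    simpa using h1
  have hy0nn : ∀ j, 0 ≤ y0 j := by
    intro j
    have h1 := hz (Sum.inr (Sum.inl j))
    rw [hzu] at h1
    rw [show ∑ l, Cc (Sum.inr (Sum.inl j)) l * packVec x0 y0 v0 l + dd (Sum.inr (Sum.inl j))
        = ∑ l, packVec 0 (Pi.single j 1) 0 l * packVec x0 y0 v0 l + 0 from rfl,
      packVec_dot, single_dot] at h1
    simpa using h1
  have hcol : ∀ j, v0 ≤ vecMul x0 A j := by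
    intro j
    have h1 := hz (Sum.inr (Sum.inr (Sum.inl (Sum.inl j))))
    rw [hzu] at h1
    rw [show ∑ l, Cc (Sum.inr (Sum.inr (Sum.inl (Sum.inl j)))) l * packVec x0 y0 v0 l
          + dd (Sum.inr (Sum.inr (Sum.inl (Sum.inl j))))
        = ∑ l, packVec (fun i => A i j) 0 (-1) l * packVec x0 y0 v0 l + 0 from rfl,
      packVec_dot] at h1
    simp only [Pi.zero_apply, zero_mul, Finset.sum_const_zero, add_zero, neg_one_mul,
      neg_mul] at h1
    have e : vecMul x0 A j = ∑ i, A i j * x0 i := by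
      simp only [vecMul, dotProduct]
      exact Finset.sum_congr rfl fun i _ => by ring
    rw [e]
    linarith
  have hrow : ∀ i, A.mulVec y0 i ≤ v0 := by
    intro i
    have h1 := hz (Sum.inr (Sum.inr (Sum.inl (Sum.inr i))))
    rw [hzu] at h1
    rw [show ∑ l, Cc (Sum.inr (Sum.inr (Sum.inl (Sum.inr i)))) l * packVec x0 y0 v0 l
          + dd (Sum.inr (Sum.inr (Sum.inl (Sum.inr i))))
        = ∑ l, packVec 0 (fun j => -A i j) 1 l * packVec x0 y0 v0 l + 0 from rfl,
      packVec_dot] at h1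
    simp only [Pi.zero_apply, zero_mul, Finset.sum_const_zero, neg_mul, zero_add, add_zero,
      one_mul, Finset.sum_neg_distrib] at h1
    have e : A.mulVec y0 i = ∑ j, A i j * y0 j := rfl
    rw [e]
    linarith
  have hx0sum : ∑ i, x0 i = 1 := by
    have h1 := hz (Sum.inr (Sum.inr (Sum.inr (Sum.inl true))))
    have h2 := hz (Sum.inr (Sum.inr (Sum.inr (Sum.inl false))))
    rw [hzu] at h1 h2
    rw [show ∑ l, Cc (Sum.inr (Sum.inr (Sum.inr (Sum.inl true)))) l * packVec x0 y0 v0 l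
          + dd (Sum.inr (Sum.inr (Sum.inr (Sum.inl true))))
        = ∑ l, packVec (fun _ => (1:ℝ)) 0 0 l * packVec x0 y0 v0 l + (-1) from rfl,
      packVec_dot] at h1
    rw [show ∑ l, Cc (Sum.inr (Sum.inr (Sum.inr (Sum.inl false)))) l * packVec x0 y0 v0 l
          + dd (Sum.inr (Sum.inr (Sum.inr (Sum.inl false))))
        = ∑ l, packVec (fun _ => (-1:ℝ)) 0 0 l * packVec x0 y0 v0 l + 1 from rfl,
      packVec_dot] at h2
    simp only [Pi.zero_apply, zero_mul, Finset.sum_const_zero, add_zero, one_mul,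
      neg_one_mul, Finset.sum_neg_distrib] at h1 h2
    linarith
  have hy0sum : ∑ j, y0 j = 1 := by
    have h1 := hz (Sum.inr (Sum.inr (Sum.inr (Sum.inr true))))
    have h2 := hz (Sum.inr (Sum.inr (Sum.inr (Sum.inr false))))
    rw [hzu] at h1 h2
    rw [show ∑ l, Cc (Sum.inr (Sum.inr (Sum.inr (Sum.inr true)))) l * packVec x0 y0 v0 l
          + dd (Sum.inr (Sum.inr (Sum.inr (Sum.inr true))))
        = ∑ l, packVec 0 (fun _ => (1:ℝ)) 0 l * packVec x0 y0 v0 l + (-1) from rfl,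
      packVec_dot] at h1
    rw [show ∑ l, Cc (Sum.inr (Sum.inr (Sum.inr (Sum.inr false)))) l * packVec x0 y0 v0 l
          + dd (Sum.inr (Sum.inr (Sum.inr (Sum.inr false))))
        = ∑ l, packVec 0 (fun _ => (-1:ℝ)) 0 l * packVec x0 y0 v0 l + 1 from rfl,
      packVec_dot] at h2
    simp only [Pi.zero_apply, zero_mul, Finset.sum_const_zero, add_zero, zero_add, one_mul,
      neg_one_mul, Finset.sum_neg_distrib] at h1 h2
    linarith
  have hx0mem : x0 ∈ stdSimplex ℝ (Fin m) := ⟨hx0nn, hx0sum⟩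
  have hy0mem : y0 ∈ stdSimplex ℝ (Fin n) := ⟨hy0nn, hy0sum⟩
  -- saddle point properties
  have hub : ∀ x ∈ stdSimplex ℝ (Fin m), payoff A x y0 ≤ v0 := by
    intro x hx
    rw [payoff_eq_sum_left]
    exact sum_mul_le_of_mem_stdSimplex hx fun i => hrow i
  have hlb : ∀ y ∈ stdSimplex ℝ (Fin n), v0 ≤ payoff A x0 y := by
    intro y hy
    rw [payoff_eq_sum_right]
    exact le_sum_mul_of_mem_stdSimplex hy fun j => hcol j
  have hpv : payoff A x0 y0 = v0 := le_antisymm (hub x0 hx0mem) (hlb y0 hy0mem)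
  -- value of the game
  haveI hne_m : Nonempty (stdSimplex ℝ (Fin m)) := ⟨⟨x0, hx0mem⟩⟩
  haveI hne_n : Nonempty (stdSimplex ℝ (Fin n)) := ⟨⟨y0, hy0mem⟩⟩
  have hbdd : ∀ x : stdSimplex ℝ (Fin m),
      BddBelow (Set.range fun y : stdSimplex ℝ (Fin n) => payoff A x.1 y.1) := by
    intro x
    refine ⟨Finset.univ.inf' Finset.univ_nonempty (fun j => vecMul x.1 A j), ?_⟩
    rintro w ⟨y, rfl⟩
    show Finset.univ.inf' Finset.univ_nonempty (fun j => vecMul x.1 A j) ≤ payoff A x.1 y.1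
    rw [payoff_eq_sum_right]
    exact le_sum_mul_of_mem_stdSimplex y.2 fun j => Finset.inf'_le _ (Finset.mem_univ j)
  have hIle : ∀ x : stdSimplex ℝ (Fin m),
      (⨅ y : stdSimplex ℝ (Fin n), payoff A x.1 y.1) ≤ v0 := fun x =>
    le_trans (ciInf_le (hbdd x) ⟨y0, hy0mem⟩) (hub x.1 x.2)
  have hval : matrixVal A = v0 := by
    have h2 : v0 ≤ ⨅ y : stdSimplex ℝ (Fin n),
        payoff A ((⟨x0, hx0mem⟩ : stdSimplex ℝ (Fin m))).1 y.1 :=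
      le_ciInf fun y => hlb y.1 y.2
    have h3 : (⨅ y : stdSimplex ℝ (Fin n),
          payoff A ((⟨x0, hx0mem⟩ : stdSimplex ℝ (Fin m))).1 y.1)
        ≤ ⨆ x : stdSimplex ℝ (Fin m), ⨅ y : stdSimplex ℝ (Fin n), payoff A x.1 y.1 := by
      refine le_ciSup (f := fun x : stdSimplex ℝ (Fin m) =>
        ⨅ y : stdSimplex ℝ (Fin n), payoff A x.1 y.1) ⟨v0, ?_⟩
        (⟨x0, hx0mem⟩ : stdSimplex ℝ (Fin m))
      rintro w ⟨x, rfl⟩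
      exact hIle x
    exact le_antisymm (ciSup_le hIle) (le_trans h2 h3)
  constructor
  · rw [hval]
    exact hzF (Fin.last (m + n))
  · refine ⟨x0, hx0mem, y0, hy0mem, ?_, ?_, ?_, ?_⟩
    · intro x hx
      rw [hpv]
      exact hub x hx
    · intro y hy
      rw [hpv]
      exact hlb y hy
    · intro i
      exact hzF _
    · intro j
      exact hzF _
end

section
/- Let A be an m×n real matrix game with val(A) ≠ 0. Then there exist nonempty index sets I ⊆ {1,…,m} and J ⊆ {1,…,n} with |I| = |J| such that the square submatrix Ā = A[I,J] is invertible and val(Ā) = val(A) = det(Ā) / (Σ_{i,j} Ā^{ij}) = (𝟏ᵀ Ā⁻¹ 𝟏)⁻¹, where Ā^{ij} denotes the (i,j)-th cofactor of Ā and 𝟏 is the all-ones vector. -/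
open Matrix

open Finset

namespace SSK

variable {m n : ℕ}

lemma vecMul_apply (A : Matrix (Fin m) (Fin n) ℝ) (x : Fin m → ℝ) (j : Fin n) :
    (x ᵥ* A) j = ∑ i, x i * A i j := by simp [Matrix.vecMul, dotProduct]

lemma mulVec_apply (A : Matrix (Fin m) (Fin n) ℝ) (y : Fin n → ℝ) (i : Fin m) :
    (A *ᵥ y) i = ∑ j, A i j * y j := by simp [Matrix.mulVec, dotProduct]

lemma payoff_eq (A : Matrix (Fin m) (Fin n) ℝ) (x : Fin m → ℝ) (y : Fin n → ℝ) :
    payoff A x y = (x ᵥ* A) ⬝ᵥ y := dotProduct_mulVec x A y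

lemma le_dot {k : ℕ} {w y : Fin k → ℝ} (hy : y ∈ stdSimplex ℝ (Fin k)) {c : ℝ}
    (h : ∀ j, c ≤ w j) : c ≤ w ⬝ᵥ y := by
  have h1 : ∑ j, c * y j ≤ ∑ j, w j * y j :=
    Finset.sum_le_sum fun j _ => mul_le_mul_of_nonneg_right (h j) (hy.1 j)
  calc c = ∑ j, c * y j := by rw [← Finset.mul_sum, hy.2, mul_one]
    _ ≤ ∑ j, w j * y j := h1
    _ = w ⬝ᵥ y := rfl

lemma dot_le {k : ℕ} {w y : Fin k → ℝ} (hy : y ∈ stdSimplex ℝ (Fin k)) {c : ℝ}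
    (h : ∀ j, w j ≤ c) : y ⬝ᵥ w ≤ c := by
  have h1 : ∑ j, y j * w j ≤ ∑ j, y j * c :=
    Finset.sum_le_sum fun j _ => mul_le_mul_of_nonneg_left (h j) (hy.1 j)
  calc y ⬝ᵥ w = ∑ j, y j * w j := rfl
    _ ≤ ∑ j, y j * c := h1
    _ = c := by rw [← Finset.sum_mul, hy.2, one_mul]

lemma exists_min {k : ℕ} (hk : 0 < k) (f : Fin k → ℝ) : ∃ j₀, ∀ j, f j₀ ≤ f j :=
  haveI : Nonempty (Fin k) := ⟨⟨0, hk⟩⟩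
  Finite.exists_min f

/-- The inner infimum equals the minimal entry of `x ᵥ* A`. -/
lemma iInf_payoff_eq (A : Matrix (Fin m) (Fin n) ℝ) (x : Fin m → ℝ) {j₀ : Fin n}
    (hj₀ : ∀ j, (x ᵥ* A) j₀ ≤ (x ᵥ* A) j) :
    ⨅ y : stdSimplex ℝ (Fin n), payoff A x y.1 = (x ᵥ* A) j₀ := by
  haveI : Nonempty (stdSimplex ℝ (Fin n)) := ⟨⟨Pi.single j₀ 1, single_mem_stdSimplex ℝ j₀⟩⟩
  apply le_antisymm
  · have hb : BddBelow (Set.range fun y : stdSimplex ℝ (Fin n) => payoff A x y.1) := by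
      refine ⟨(x ᵥ* A) j₀, ?_⟩
      rintro r ⟨y, rfl⟩
      show (x ᵥ* A) j₀ ≤ payoff A x y.1
      rw [payoff_eq]; exact le_dot y.2 hj₀
    have := ciInf_le hb (⟨Pi.single j₀ 1, single_mem_stdSimplex ℝ j₀⟩ : stdSimplex ℝ (Fin n))
    calc ⨅ y : stdSimplex ℝ (Fin n), payoff A x y.1 ≤ payoff A x (Pi.single j₀ 1) := this
      _ = (x ᵥ* A) j₀ := by rw [payoff_eq, dotProduct_single, mul_one]
  · refine le_ciInf fun y => ?_
    show (x ᵥ* A) j₀ ≤ payoff A x y.1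
    rw [payoff_eq]; exact le_dot y.2 hj₀

/-- If `x` guarantees `v` and `y` caps at `v`, then `matrixVal A = v`. -/
lemma matrixVal_eq_of (hn : 0 < n) (A : Matrix (Fin m) (Fin n) ℝ) {v : ℝ}
    {x : Fin m → ℝ} {y : Fin n → ℝ}
    (hx : x ∈ stdSimplex ℝ (Fin m)) (hy : y ∈ stdSimplex ℝ (Fin n))
    (h1 : ∀ j, v ≤ (x ᵥ* A) j) (h2 : ∀ i, (A *ᵥ y) i ≤ v) :
    matrixVal A = v := by
  haveI : Nonempty (stdSimplex ℝ (Fin m)) := ⟨⟨x, hx⟩⟩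
  have hub : ∀ z : stdSimplex ℝ (Fin m),
      (⨅ y' : stdSimplex ℝ (Fin n), payoff A z.1 y'.1) ≤ v := by
    intro z
    obtain ⟨j₀, hj₀⟩ := exists_min hn (z.1 ᵥ* A)
    rw [iInf_payoff_eq A z.1 hj₀]
    have step1 : (z.1 ᵥ* A) j₀ ≤ (z.1 ᵥ* A) ⬝ᵥ y := le_dot hy hj₀
    have step2 : (z.1 ᵥ* A) ⬝ᵥ y = z.1 ⬝ᵥ (A *ᵥ y) := (dotProduct_mulVec z.1 A y).symm
    have step3 : z.1 ⬝ᵥ (A *ᵥ y) ≤ v := dot_le z.2 h2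
    linarith
  apply le_antisymm
  · exact ciSup_le hub
  · have hb : BddAbove (Set.range fun z : stdSimplex ℝ (Fin m) =>
        ⨅ y' : stdSimplex ℝ (Fin n), payoff A z.1 y'.1) := by
      refine ⟨v, ?_⟩; rintro r ⟨z, rfl⟩; exact hub z
    obtain ⟨j₀, hj₀⟩ := exists_min hn (x ᵥ* A)
    have : v ≤ ⨅ y' : stdSimplex ℝ (Fin n), payoff A x y'.1 := by
      rw [iInf_payoff_eq A x hj₀]; exact h1 j₀
    exact this.trans (le_ciSup hb (⟨x, hx⟩ : stdSimplex ℝ (Fin m)))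

/-- Existence of an optimal strategy for the maximizer. -/
lemma exists_opt_row (hm : 0 < m) (hn : 0 < n) (A : Matrix (Fin m) (Fin n) ℝ) :
    ∃ x ∈ stdSimplex ℝ (Fin m), ∀ j, matrixVal A ≤ (x ᵥ* A) j := by
  haveI : Nonempty (Fin n) := ⟨⟨0, hn⟩⟩
  haveI : Nonempty (Fin m) := ⟨⟨0, hm⟩⟩
  set g : (Fin m → ℝ) → ℝ := fun x => Finset.univ.inf' univ_nonempty (fun j => (x ᵥ* A) j) with hg
  have hgcont : Continuous g := by
    rw [continuous_iff_continuousAt]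
    intro x
    apply ContinuousAt.finset_inf'_apply
    intro j _
    have : Continuous fun x : Fin m → ℝ => (x ᵥ* A) j := by
      simp only [vecMul_apply]
      exact continuous_finset_sum _ fun i _ => (continuous_apply i).mul continuous_const
    exact this.continuousAt
  obtain ⟨x₀, hx₀, hmax⟩ := (isCompact_stdSimplex ℝ (Fin m)).exists_isMaxOn
    ⟨_, single_mem_stdSimplex ℝ (⟨0, hm⟩ : Fin m)⟩ hgcont.continuousOn
  -- Phi z = g z
  have hPhi : ∀ z : Fin m → ℝ, (⨅ y : stdSimplex ℝ (Fin n), payoff A z y.1) = g z := by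
    intro z
    obtain ⟨j₀, _, hj₀eq⟩ := Finset.exists_mem_eq_inf' (univ_nonempty) (fun j => (z ᵥ* A) j)
    have hj₀ : ∀ j, (z ᵥ* A) j₀ ≤ (z ᵥ* A) j := by
      intro j
      rw [← hj₀eq]
      exact Finset.inf'_le _ (mem_univ j)
    rw [iInf_payoff_eq A z hj₀]
    exact hj₀eq.symm
  haveI : Nonempty (stdSimplex ℝ (Fin m)) := ⟨⟨x₀, hx₀⟩⟩
  have hval : matrixVal A = g x₀ := by
    apply le_antisymm
    · apply ciSup_le
      intro z
      show (⨅ y : stdSimplex ℝ (Fin n), payoff A z.1 y.1) ≤ g x₀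
      rw [hPhi z.1]
      exact hmax z.2
    · have hb : BddAbove (Set.range fun z : stdSimplex ℝ (Fin m) =>
          ⨅ y' : stdSimplex ℝ (Fin n), payoff A z.1 y'.1) := by
        refine ⟨g x₀, ?_⟩; rintro r ⟨z, rfl⟩
        show (⨅ y : stdSimplex ℝ (Fin n), payoff A z.1 y.1) ≤ g x₀
        rw [hPhi z.1]; exact hmax z.2
      have := le_ciSup hb (⟨x₀, hx₀⟩ : stdSimplex ℝ (Fin m))
      rw [hPhi x₀] at this
      exact this
  refine ⟨x₀, hx₀, fun j => ?_⟩
  rw [hval]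
  exact Finset.inf'_le _ (mem_univ j)

/-- Existence of an optimal strategy for the minimizer (via separation / minimax). -/
lemma exists_opt_col (hm : 0 < m) (hn : 0 < n) (A : Matrix (Fin m) (Fin n) ℝ) :
    ∃ y ∈ stdSimplex ℝ (Fin n), ∀ i, (A *ᵥ y) i ≤ matrixVal A := by
  haveI : Nonempty (Fin n) := ⟨⟨0, hn⟩⟩
  haveI : Nonempty (Fin m) := ⟨⟨0, hm⟩⟩
  set h : (Fin n → ℝ) → ℝ := fun y => Finset.univ.sup' univ_nonempty (fun i => (A *ᵥ y) i) with hh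
  have hhcont : Continuous h := by
    rw [continuous_iff_continuousAt]
    intro y
    apply ContinuousAt.finset_sup'_apply
    intro i _
    have : Continuous fun y : Fin n → ℝ => (A *ᵥ y) i := by
      simp only [mulVec_apply]
      exact continuous_finset_sum _ fun j _ => continuous_const.mul (continuous_apply j)
    exact this.continuousAt
  obtain ⟨y₀, hy₀, hmin⟩ := (isCompact_stdSimplex ℝ (Fin n)).exists_isMinOn
    ⟨_, single_mem_stdSimplex ℝ (⟨0, hn⟩ : Fin n)⟩ hhcont.continuousOn
  set w : ℝ := h y₀ with hw
  have hcap : ∀ i, (A *ᵥ y₀) i ≤ w := fun i => Finset.le_sup' _ (mem_univ i)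
  suffices hwv : w ≤ matrixVal A by
    exact ⟨y₀, hy₀, fun i => (hcap i).trans hwv⟩
  -- Separate K = A '' simplex from U = {z | ∀ i, z i < w}
  set U : Set (Fin m → ℝ) := Set.pi Set.univ (fun _ => Set.Iio w) with hU
  set K : Set (Fin m → ℝ) :=
    (A.mulVecLin : (Fin n → ℝ) →ₗ[ℝ] (Fin m → ℝ)) '' stdSimplex ℝ (Fin n) with hK
  have hUopen : IsOpen U := isOpen_set_pi Set.finite_univ (fun _ _ => isOpen_Iio)
  have hUconv : Convex ℝ U := convex_pi (fun _ _ => convex_Iio w)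
  have hKconv : Convex ℝ K := (convex_stdSimplex ℝ (Fin n)).linear_image _
  have hdisj : Disjoint U K := by
    rw [Set.disjoint_left]
    rintro z hzU ⟨y, hy, rfl⟩
    have h1 : h y < w := by
      rw [hh]
      simp only [Finset.sup'_lt_iff]
      intro i _
      exact hzU i (Set.mem_univ i)
    exact absurd (hmin hy) (not_le.mpr h1)
  obtain ⟨f, u, hfU, hfK⟩ := geometric_hahn_banach_open hUconv hUopen hKconv hdisj
  set c : Fin m → ℝ := fun i => f (Pi.single i 1) with hc
  have hfc : ∀ z : Fin m → ℝ, f z = ∑ i, z i * c i := by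
    intro z
    have hz : z = ∑ i, z i • (Pi.single i (1 : ℝ) : Fin m → ℝ) := by
      have h1 : ∀ i, z i • (Pi.single i (1 : ℝ) : Fin m → ℝ) = Pi.single i (z i) := by
        intro i
        rw [← Pi.single_smul, smul_eq_mul, mul_one]
      rw [Finset.sum_congr rfl fun i _ => h1 i, Finset.univ_sum_single]
    conv_lhs => rw [hz]
    rw [map_sum]
    simp only [ContinuousLinearMap.map_smul, smul_eq_mul]
    rfl
  have hconstU : ∀ a : ℝ, a < w → (fun _ : Fin m => a) ∈ U := fun a ha i _ => ha
  have hfconst : ∀ a : ℝ, f (fun _ => a) = a * ∑ i, c i := by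
    intro a
    rw [hfc, Finset.mul_sum]
  -- c is nonneg
  have hcnn : ∀ i, 0 ≤ c i := by
    intro i
    by_contra hci
    push_neg at hci
    have hfw : f (fun _ => w - 1) < u := hfU _ (hconstU (w - 1) (by linarith))
    set t : ℝ := (u + 1 - f (fun _ => w - 1)) / (-c i) with ht
    have htpos : 0 < t := div_pos (by linarith) (by linarith)
    have hmem : ((fun _ : Fin m => w - 1) - t • (Pi.single i 1 : Fin m → ℝ)) ∈ U := by
      intro i' _
      have h0 : 0 ≤ t * (Pi.single i (1:ℝ) : Fin m → ℝ) i' := by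
        rcases eq_or_ne i' i with rfl | hne
        · simp [htpos.le]
        · simp [Pi.single_eq_of_ne hne]
      show ((fun _ : Fin m => w - 1) - t • (Pi.single i 1 : Fin m → ℝ)) i' < w
      simp only [Pi.sub_apply, Pi.smul_apply, smul_eq_mul]
      linarith
    have hlt := hfU _ hmem
    rw [map_sub, ContinuousLinearMap.map_smul, smul_eq_mul] at hlt
    have hfs : f (Pi.single i 1) = c i := rfl
    rw [hfs] at hlt
    have hti : t * (-c i) = u + 1 - f (fun _ => w - 1) := by
      rw [ht]
      exact div_mul_cancel₀ _ (ne_of_gt (by linarith))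
    have hmn : t * (-c i) = -(t * c i) := mul_neg t (c i)
    linarith
  have hKne : (A *ᵥ Pi.single (⟨0, hn⟩ : Fin n) 1) ∈ K :=
    ⟨_, single_mem_stdSimplex ℝ _, rfl⟩
  set S : ℝ := ∑ i, c i with hS
  have hSnn : 0 ≤ S := Finset.sum_nonneg fun i _ => hcnn i
  have hcS : 0 < S := by
    rcases lt_or_eq_of_le hSnn with h | h
    · exact h
    · exfalso
      have hc0 : ∀ i, c i = 0 := by
        intro i
        exact (Finset.sum_eq_zero_iff_of_nonneg (fun i _ => hcnn i)).mp h.symm i (mem_univ i)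
      have h1 : f (fun _ => w - 1) < u := hfU _ (hconstU (w - 1) (by linarith))
      have h2 : u ≤ f (A *ᵥ Pi.single (⟨0, hn⟩ : Fin n) 1) := hfK _ hKne
      rw [hfc] at h1 h2
      simp only [hc0, mul_zero, Finset.sum_const_zero] at h1 h2
      linarith
  -- u ≥ w * S
  have hwSu : w * S ≤ u := by
    by_contra hlt
    push_neg at hlt
    set ε : ℝ := (w * S - u) / (2 * S) with he
    have hεpos : 0 < ε := div_pos (by linarith) (by linarith)
    have hmem : (fun _ : Fin m => w - ε) ∈ U := hconstU _ (by linarith)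
    have h1 := hfU _ hmem
    rw [hfconst] at h1
    have hεS : ε * S = (w * S - u) / 2 := by
      rw [he]
      field_simp
    have hexp : (w - ε) * S = w * S - ε * S := by ring
    linarith
  -- the strategy x̂ = c / S is optimal and guarantees w
  set xh : Fin m → ℝ := fun i => c i / S with hxh
  have hxhmem : xh ∈ stdSimplex ℝ (Fin m) := by
    constructor
    · intro i
      exact div_nonneg (hcnn i) hSnn
    · rw [hxh]
      simp only
      rw [← Finset.sum_div, ← hS]
      field_simp
  have hge : ∀ j, w ≤ (xh ᵥ* A) j := by
    intro j
    have hcolK : (A *ᵥ Pi.single j 1) ∈ K := ⟨_, single_mem_stdSimplex ℝ j, rfl⟩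
    have h1 : u ≤ f (A *ᵥ Pi.single j 1) := hfK _ hcolK
    rw [hfc] at h1
    have h2 : ∀ i, (A *ᵥ Pi.single j (1:ℝ)) i = A i j := by
      intro i
      rw [Matrix.mulVec_single]
      exact mul_one _
    rw [Finset.sum_congr rfl fun i _ => by rw [h2 i]] at h1
    have h3 : (xh ᵥ* A) j = (∑ i, A i j * c i) / S := by
      rw [vecMul_apply, Finset.sum_div]
      refine Finset.sum_congr rfl fun i _ => ?_
      simp only [hxh]
      ring
    rw [h3]
    rw [le_div_iff₀ hcS]
    nlinarith
  have := matrixVal_eq_of hn A hxhmem hy₀ hge hcap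
  linarith [this.ge]

/-- Complementary slackness. -/
lemma comp_slack {A : Matrix (Fin m) (Fin n) ℝ} {v : ℝ} {x : Fin m → ℝ} {y : Fin n → ℝ}
    (hx : x ∈ stdSimplex ℝ (Fin m)) (hy : y ∈ stdSimplex ℝ (Fin n))
    (h1 : ∀ j, v ≤ (x ᵥ* A) j) (h2 : ∀ i, (A *ᵥ y) i ≤ v) :
    (∀ i, x i ≠ 0 → (A *ᵥ y) i = v) ∧ (∀ j, y j ≠ 0 → (x ᵥ* A) j = v) := by
  have hple : x ⬝ᵥ (A *ᵥ y) ≤ v := dot_le hx h2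
  have hpge : v ≤ x ⬝ᵥ (A *ᵥ y) := by
    rw [dotProduct_mulVec]
    exact le_dot hy h1
  have hp : x ⬝ᵥ (A *ᵥ y) = v := le_antisymm hple hpge
  constructor
  · intro i hxi
    have hterm : ∑ i', x i' * (v - (A *ᵥ y) i') = 0 := by
      have hdp : x ⬝ᵥ (A *ᵥ y) = ∑ i', x i' * (A *ᵥ y) i' := rfl
      have : ∑ i', x i' * (v - (A *ᵥ y) i') = (∑ i', x i' * v) - ∑ i', x i' * (A *ᵥ y) i' := by
        rw [← Finset.sum_sub_distrib]
        exact Finset.sum_congr rfl fun i' _ => by ring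
      rw [this, ← Finset.sum_mul, hx.2, one_mul, ← hdp, hp, sub_self]
    have hnn : ∀ i' ∈ Finset.univ, 0 ≤ x i' * (v - (A *ᵥ y) i') :=
      fun i' _ => mul_nonneg (hx.1 i') (by linarith [h2 i'])
    have := (Finset.sum_eq_zero_iff_of_nonneg hnn).mp hterm i (mem_univ i)
    rcases mul_eq_zero.mp this with h | h
    · exact absurd h hxi
    · linarith
  · intro j hyj
    have hterm : ∑ j', y j' * ((x ᵥ* A) j' - v) = 0 := by
      have hdp : y ⬝ᵥ (x ᵥ* A) = ∑ j', y j' * (x ᵥ* A) j' := rfl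
      have : ∑ j', y j' * ((x ᵥ* A) j' - v) = (∑ j', y j' * (x ᵥ* A) j') - ∑ j', y j' * v := by
        rw [← Finset.sum_sub_distrib]
        exact Finset.sum_congr rfl fun j' _ => by ring
      rw [this, ← Finset.sum_mul, hy.2, one_mul, ← hdp]
      have : y ⬝ᵥ (x ᵥ* A) = x ⬝ᵥ (A *ᵥ y) := by
        rw [dotProduct_mulVec, dotProduct_comm]
      rw [this, hp, sub_self]
    have hnn : ∀ j' ∈ Finset.univ, 0 ≤ y j' * ((x ᵥ* A) j' - v) :=
      fun j' _ => mul_nonneg (hy.1 j') (by linarith [h1 j'])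
    have := (Finset.sum_eq_zero_iff_of_nonneg hnn).mp hterm j (mem_univ j)
    rcases mul_eq_zero.mp this with h | h
    · exact absurd h hyj
    · linarith

/-- Existence of a "basic" optimal strategy: an optimal strategy whose support-rows,
restricted to the tight columns, are linearly independent. -/
lemma exists_basic_opt {A : Matrix (Fin m) (Fin n) ℝ} {v : ℝ} (hv : v ≠ 0)
    {x : Fin m → ℝ} {y : Fin n → ℝ}
    (hx : x ∈ stdSimplex ℝ (Fin m)) (hy : y ∈ stdSimplex ℝ (Fin n))
    (h1 : ∀ j, v ≤ (x ᵥ* A) j) (h2 : ∀ i, (A *ᵥ y) i ≤ v) :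
    ∃ xh, xh ∈ stdSimplex ℝ (Fin m) ∧ (∀ j, v ≤ (xh ᵥ* A) j) ∧
      ∀ c : Fin m → ℝ, (∀ i, xh i = 0 → c i = 0) →
        (∀ j, (xh ᵥ* A) j = v → ∑ i, c i * A i j = 0) → c = 0 := by
  classical
  set Feas : (Fin m → ℝ) → Prop :=
    fun z => z ∈ stdSimplex ℝ (Fin m) ∧ ∀ j, v ≤ (z ᵥ* A) j with hFeas
  set score : (Fin m → ℝ) → ℕ := fun z =>
    (Finset.univ.filter fun i => z i ≠ 0).card +
      (Finset.univ.filter fun j => (z ᵥ* A) j ≠ v).card with hscore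
  set T : Set ℕ := {k | ∃ z, Feas z ∧ score z = k} with hT
  have hTne : T.Nonempty := ⟨score x, x, ⟨hx, h1⟩, rfl⟩
  obtain ⟨xh, hxhF, hxhs⟩ : ∃ z, Feas z ∧ score z = sInf T := Nat.sInf_mem hTne
  refine ⟨xh, hxhF.1, hxhF.2, ?_⟩
  have hcs := comp_slack hxhF.1 hy hxhF.2 h2
  intro c hcsupp hctight
  by_contra hc0
  have hsum : ∑ i, c i = 0 := by
    have hv' : v * ∑ i, c i = 0 := by
      calc v * ∑ i, c i = ∑ i, c i * v := by
            rw [Finset.mul_sum]; exact Finset.sum_congr rfl fun i _ => mul_comm v (c i)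
        _ = ∑ i, c i * (A *ᵥ y) i := by
            refine Finset.sum_congr rfl fun i _ => ?_
            rcases eq_or_ne (c i) 0 with h | h
            · rw [h, zero_mul, zero_mul]
            · have hxi : xh i ≠ 0 := fun he => h (hcsupp i he)
              rw [hcs.1 i hxi]
        _ = c ⬝ᵥ (A *ᵥ y) := rfl
        _ = (c ᵥ* A) ⬝ᵥ y := dotProduct_mulVec c A y
        _ = ∑ j, (c ᵥ* A) j * y j := rfl
        _ = 0 := by
            refine Finset.sum_eq_zero fun j _ => ?_
            rcases eq_or_ne (y j) 0 with h | h
            · rw [h, mul_zero]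
            · have : (xh ᵥ* A) j = v := hcs.2 j h
              rw [vecMul_apply, hctight j this, zero_mul]
    exact (mul_eq_zero.mp hv').resolve_left hv
  have key : ∀ d : Fin m → ℝ, (∀ i, xh i = 0 → d i = 0) →
      (∀ j, (xh ᵥ* A) j = v → ∑ i, d i * A i j = 0) → (∑ i, d i = 0) →
      (∃ i, d i < 0) → False := by
    rintro d hdsupp hdtight hdsum ⟨i₁, hi₁⟩
    have hsuppd : ∀ i, d i ≠ 0 → xh i ≠ 0 := fun i hdi hxi => hdi (hdsupp i hxi)
    set F1 : Finset (Fin m) := Finset.univ.filter (fun i => d i < 0) with hF1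
    set F2 : Finset (Fin n) := Finset.univ.filter (fun j => ∑ i, d i * A i j < 0) with hF2
    have hi₁F : i₁ ∈ F1 := by rw [hF1, Finset.mem_filter]; exact ⟨mem_univ i₁, hi₁⟩
    set cands : Finset ℝ := F1.image (fun i => xh i / (-d i)) ∪
      F2.image (fun j => ((xh ᵥ* A) j - v) / (-(∑ i, d i * A i j))) with hcands
    have hcne : cands.Nonempty :=
      ⟨_, Finset.mem_union_left _ (Finset.mem_image_of_mem _ hi₁F)⟩
    set t : ℝ := cands.min' hcne with htdef
    have htpos : 0 < t := by
      rw [htdef, Finset.lt_min'_iff]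
      intro b hb
      rw [hcands, Finset.mem_union] at hb
      rcases hb with hb | hb
      · obtain ⟨i, hiF, rfl⟩ := Finset.mem_image.mp hb
        rw [hF1, Finset.mem_filter] at hiF
        have hxi : 0 < xh i :=
          lt_of_le_of_ne (hxhF.1.1 i) (Ne.symm (hsuppd i (ne_of_lt hiF.2)))
        exact div_pos hxi (by linarith [hiF.2])
      · obtain ⟨j, hjF, rfl⟩ := Finset.mem_image.mp hb
        rw [hF2, Finset.mem_filter] at hjF
        have hnt : (xh ᵥ* A) j ≠ v := fun he => (ne_of_lt hjF.2) (hdtight j he)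
        have hgt : v < (xh ᵥ* A) j := lt_of_le_of_ne (hxhF.2 j) (Ne.symm hnt)
        exact div_pos (by linarith) (by linarith [hjF.2])
    set x' : Fin m → ℝ := fun i => xh i + t * d i with hx'
    have hx'col : ∀ j, (x' ᵥ* A) j = (xh ᵥ* A) j + t * ∑ i, d i * A i j := by
      intro j
      rw [vecMul_apply (A := A) (x := x'), vecMul_apply, Finset.mul_sum, ← Finset.sum_add_distrib]
      refine Finset.sum_congr rfl fun i _ => ?_
      rw [hx']; ring
    have hmin1 : ∀ i, d i < 0 → t * (-d i) ≤ xh i := by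
      intro i hdi
      have hmem : xh i / (-d i) ∈ cands := Finset.mem_union_left _
        (Finset.mem_image_of_mem _ (by rw [hF1, Finset.mem_filter]; exact ⟨mem_univ i, hdi⟩))
      have hle : t ≤ xh i / (-d i) := Finset.min'_le _ _ hmem
      calc t * (-d i) ≤ (xh i / (-d i)) * (-d i) :=
            mul_le_mul_of_nonneg_right hle (by linarith)
        _ = xh i := div_mul_cancel₀ _ (by linarith)
    have hmin2 : ∀ j, (∑ i, d i * A i j) < 0 →
        t * (-(∑ i, d i * A i j)) ≤ (xh ᵥ* A) j - v := by
      intro j hsj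
      have hmem : ((xh ᵥ* A) j - v) / (-(∑ i, d i * A i j)) ∈ cands := Finset.mem_union_right _
        (Finset.mem_image_of_mem _ (by rw [hF2, Finset.mem_filter]; exact ⟨mem_univ j, hsj⟩))
      have hle : t ≤ ((xh ᵥ* A) j - v) / (-(∑ i, d i * A i j)) := Finset.min'_le _ _ hmem
      calc t * (-(∑ i, d i * A i j)) ≤
          (((xh ᵥ* A) j - v) / (-(∑ i, d i * A i j))) * (-(∑ i, d i * A i j)) :=
            mul_le_mul_of_nonneg_right hle (by linarith)
        _ = (xh ᵥ* A) j - v := div_mul_cancel₀ _ (by linarith)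
    have hx'F : Feas x' := by
      refine ⟨⟨fun i => ?_, ?_⟩, fun j => ?_⟩
      · show 0 ≤ xh i + t * d i
        rcases lt_or_ge (d i) 0 with hdi | hdi
        · have := hmin1 i hdi; nlinarith
        · nlinarith [mul_nonneg htpos.le hdi, hxhF.1.1 i]
      · show ∑ i, (xh i + t * d i) = 1
        rw [Finset.sum_add_distrib, ← Finset.mul_sum, hdsum, mul_zero, add_zero]
        exact hxhF.1.2
      · rw [hx'col j]
        rcases lt_or_ge (∑ i, d i * A i j) 0 with hs | hs
        · have := hmin2 j hs; linarith
        · nlinarith [mul_nonneg htpos.le hs, hxhF.2 j]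
    have hsuppmono : (Finset.univ.filter fun i => x' i ≠ 0) ⊆
        (Finset.univ.filter fun i => xh i ≠ 0) := by
      intro i hi
      rw [Finset.mem_filter] at hi ⊢
      refine ⟨mem_univ i, fun hxi => ?_⟩
      apply hi.2
      show xh i + t * d i = 0
      rw [hxi, hdsupp i hxi, mul_zero, add_zero]
    have htightmono : (Finset.univ.filter fun j => (x' ᵥ* A) j ≠ v) ⊆
        (Finset.univ.filter fun j => (xh ᵥ* A) j ≠ v) := by
      intro j hj
      rw [Finset.mem_filter] at hj ⊢
      refine ⟨mem_univ j, fun hje => ?_⟩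
      apply hj.2
      rw [hx'col j, hje, hdtight j hje, mul_zero, add_zero]
    have htmem : t ∈ F1.image (fun i => xh i / (-d i)) ∪
        F2.image (fun j => ((xh ᵥ* A) j - v) / (-(∑ i, d i * A i j))) :=
      Finset.min'_mem cands hcne
    rw [Finset.mem_union] at htmem
    have hstrict : score x' < score xh := by
      have hsm := Finset.card_le_card hsuppmono
      have htm := Finset.card_le_card htightmono
      rcases htmem with hb | hb
      · obtain ⟨i₂, hiF, heq⟩ := Finset.mem_image.mp hb
        rw [hF1, Finset.mem_filter] at hiF
        have hd2 : d i₂ < 0 := hiF.2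
        have hx'i2 : x' i₂ = 0 := by
          show xh i₂ + t * d i₂ = 0
          have ht2 : t = xh i₂ / (-d i₂) := heq.symm
          have hne : -d i₂ ≠ 0 := ne_of_gt (by linarith)
          have h5 : xh i₂ / -d i₂ * d i₂ = -xh i₂ := by
            calc xh i₂ / -d i₂ * d i₂ = -(xh i₂ / -d i₂ * -d i₂) := by ring
              _ = -xh i₂ := by rw [div_mul_cancel₀ _ hne]
          rw [ht2, h5]
          ring
        have hxh2 : xh i₂ ≠ 0 := hsuppd i₂ (ne_of_lt hd2)
        have hss : (Finset.univ.filter fun i => x' i ≠ 0) ⊂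
            (Finset.univ.filter fun i => xh i ≠ 0) := by
          rw [Finset.ssubset_iff_of_subset hsuppmono]
          refine ⟨i₂, ?_, ?_⟩
          · rw [Finset.mem_filter]; exact ⟨mem_univ i₂, hxh2⟩
          · rw [Finset.mem_filter]; push_neg; intro _; exact hx'i2
        have := Finset.card_lt_card hss
        simp only [hscore]
        omega
      · obtain ⟨j₂, hjF, heq⟩ := Finset.mem_image.mp hb
        rw [hF2, Finset.mem_filter] at hjF
        have hs2 : ∑ i, d i * A i j₂ < 0 := hjF.2
        have hx'j2 : (x' ᵥ* A) j₂ = v := by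
          rw [hx'col j₂]
          have ht2 : t = ((xh ᵥ* A) j₂ - v) / (-(∑ i, d i * A i j₂)) := heq.symm
          have hne : -(∑ i, d i * A i j₂) ≠ 0 := ne_of_gt (by linarith)
          have h5 : ((xh ᵥ* A) j₂ - v) / -(∑ i, d i * A i j₂) * (∑ i, d i * A i j₂) =
              -((xh ᵥ* A) j₂ - v) := by
            calc ((xh ᵥ* A) j₂ - v) / -(∑ i, d i * A i j₂) * (∑ i, d i * A i j₂) =
                -(((xh ᵥ* A) j₂ - v) / -(∑ i, d i * A i j₂) * -(∑ i, d i * A i j₂)) := by ring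
              _ = -((xh ᵥ* A) j₂ - v) := by rw [div_mul_cancel₀ _ hne]
          rw [ht2, h5]
          ring
        have hxhj2 : (xh ᵥ* A) j₂ ≠ v := fun he => (ne_of_lt hs2) (hdtight j₂ he)
        have hss : (Finset.univ.filter fun j => (x' ᵥ* A) j ≠ v) ⊂
            (Finset.univ.filter fun j => (xh ᵥ* A) j ≠ v) := by
          rw [Finset.ssubset_iff_of_subset htightmono]
          refine ⟨j₂, ?_, ?_⟩
          · rw [Finset.mem_filter]; exact ⟨mem_univ j₂, hxhj2⟩
          · rw [Finset.mem_filter]; push_neg; intro _; exact hx'j2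
        have := Finset.card_lt_card hss
        simp only [hscore]
        omega
    have hle : sInf T ≤ score x' := Nat.sInf_le ⟨x', hx'F, rfl⟩
    omega
  obtain ⟨i₀, hi₀⟩ : ∃ i, c i ≠ 0 := by
    by_contra hno; push_neg at hno; exact hc0 (funext hno)
  rcases lt_or_gt_of_ne hi₀ with hneg | hpos
  · exact key c hcsupp hctight hsum ⟨i₀, hneg⟩
  · refine key (fun i => -c i) (fun i hi => by show -c i = 0; rw [hcsupp i hi, neg_zero])
      (fun j hj => ?_) ?_ ⟨i₀, by show -c i₀ < 0; linarith⟩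
    · show ∑ i, -c i * A i j = 0
      simp only [neg_mul]
      rw [Finset.sum_neg_distrib, hctight j hj, neg_zero]
    · show ∑ i, -c i = 0
      rw [Finset.sum_neg_distrib, hsum, neg_zero]

/-- The rows of `A` indexed by `S`, restricted to the columns in `T`, are linearly
independent (expressed via coefficient vectors supported on `S`). -/
def RowIndepOn (A : Matrix (Fin m) (Fin n) ℝ) (S : Finset (Fin m)) (T : Finset (Fin n)) : Prop :=
  ∀ c : Fin m → ℝ, (∀ i ∉ S, c i = 0) → (∀ j ∈ T, ∑ i, c i * A i j = 0) → c = 0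

lemma rowIndepOn_card_le {A : Matrix (Fin m) (Fin n) ℝ} {S : Finset (Fin m)}
    {T : Finset (Fin n)} (h : RowIndepOn A S T) : S.card ≤ T.card := by
  classical
  have hli : LinearIndependent ℝ (fun i : S => (fun j : T => A i.1 j.1)) := by
    rw [Fintype.linearIndependent_iff]
    intro g hg
    set c : Fin m → ℝ := fun i => if h : i ∈ S then g ⟨i, h⟩ else 0 with hc
    have hcs : ∀ i ∉ S, c i = 0 := fun i hi => by rw [hc]; simp [hi]
    have hct : ∀ j ∈ T, ∑ i, c i * A i j = 0 := by
      intro j hj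
      have e1 : ∑ i, c i * A i j = ∑ i ∈ S, c i * A i j :=
        (Finset.sum_subset (Finset.subset_univ S)
          (fun i _ hi => by rw [hcs i hi, zero_mul])).symm
      have e2 : ∑ i ∈ S, c i * A i j = ∑ i : S, c i.1 * A i.1 j :=
        (Finset.sum_attach S fun i => c i * A i j).symm
      have e3 : ∑ i : S, c i.1 * A i.1 j = ∑ i : S, g i * A i.1 j := by
        refine Finset.sum_congr rfl fun i _ => ?_
        rw [hc]; simp [i.2]
      have e4 : ∑ i : S, g i * A i.1 j = 0 := by
        have := congrFun hg ⟨j, hj⟩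
        simpa using this
      rw [e1, e2, e3, e4]
    have hc0 := h c hcs hct
    intro i
    have : c i.1 = 0 := by rw [hc0]; rfl
    rw [hc] at this
    simpa [i.2] using this
  have := hli.fintype_card_le_finrank
  rwa [Module.finrank_fintype_fun_eq_card, Fintype.card_coe, Fintype.card_coe] at this

/-- The exchange lemma: enlarge a row-independent set `I₁` inside `I` to `S` so that
additionally the columns of `J₁` restricted to `S` stay independent. -/
lemma exchange (A : Matrix (Fin m) (Fin n) ℝ) (I₁ I : Finset (Fin m)) (J₁ J : Finset (Fin n))
    (hII : I₁ ⊆ I) (hJJ : J₁ ⊆ J)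
    (hR : RowIndepOn A I₁ J) (hC : RowIndepOn Aᵀ J₁ I) :
    ∃ S : Finset (Fin m), I₁ ⊆ S ∧ S ⊆ I ∧ RowIndepOn A S J ∧ RowIndepOn Aᵀ J₁ S := by
  classical
  set D := I.powerset.filter (fun S => I₁ ⊆ S ∧ RowIndepOn A S J) with hD
  have hDne : D.Nonempty := by
    refine ⟨I₁, ?_⟩
    rw [hD, Finset.mem_filter, Finset.mem_powerset]
    exact ⟨hII, Finset.Subset.refl _, hR⟩
  obtain ⟨S, hSD, hSmax⟩ := Finset.exists_max_image D Finset.card hDne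
  rw [hD, Finset.mem_filter, Finset.mem_powerset] at hSD
  obtain ⟨hSI, hIS, hSR⟩ := hSD
  refine ⟨S, hIS, hSI, hSR, ?_⟩
  intro dvec hdsupp hdrows
  by_contra hd0
  have hex : ∃ i ∈ I, ∑ j, dvec j * Aᵀ j i ≠ 0 := by
    by_contra hno
    push_neg at hno
    exact hd0 (hC dvec hdsupp hno)
  obtain ⟨i₃, hi₃I, hi₃⟩ := hex
  have hi₃S : i₃ ∉ S := fun hmem => hi₃ (hdrows i₃ hmem)
  have hR' : RowIndepOn A (insert i₃ S) J := by
    intro c hcs hcj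
    have swap : ∑ i, c i * (∑ j, dvec j * Aᵀ j i)
        = ∑ j, dvec j * (∑ i, c i * A i j) := by
      have e1 : ∀ i : Fin m, c i * (∑ j, dvec j * Aᵀ j i) = ∑ j, c i * (dvec j * Aᵀ j i) :=
        fun i => Finset.mul_sum _ _ _
      have e2 : ∀ j : Fin n, dvec j * (∑ i, c i * A i j) = ∑ i, dvec j * (c i * A i j) :=
        fun j => Finset.mul_sum _ _ _
      rw [Finset.sum_congr rfl fun i _ => e1 i, Finset.sum_congr rfl fun j _ => e2 j,
        Finset.sum_comm]
      exact Finset.sum_congr rfl fun j _ => Finset.sum_congr rfl fun i _ => by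
        rw [transpose_apply]; ring
    have hpair : ∑ j, dvec j * (∑ i, c i * A i j) = 0 := by
      refine Finset.sum_eq_zero fun j _ => ?_
      rcases eq_or_ne (dvec j) 0 with h | h
      · rw [h, zero_mul]
      · have hjJ₁ : j ∈ J₁ := by
          by_contra hjn
          exact h (hdsupp j hjn)
        rw [hcj j (hJJ hjJ₁), mul_zero]
    have hsingle : ∑ i, c i * (∑ j, dvec j * Aᵀ j i) = c i₃ * (∑ j, dvec j * Aᵀ j i₃) := by
      refine Finset.sum_eq_single_of_mem i₃ (mem_univ i₃) fun i _ hne => ?_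
      by_cases hiS : i ∈ S
      · rw [hdrows i hiS, mul_zero]
      · have : i ∉ insert i₃ S := by
          rw [Finset.mem_insert]
          push_neg
          exact ⟨hne, hiS⟩
        rw [hcs i this, zero_mul]
    have hc3 : c i₃ = 0 := by
      have h0 : c i₃ * (∑ j, dvec j * Aᵀ j i₃) = 0 := by rw [← hsingle, swap, hpair]
      exact (mul_eq_zero.mp h0).resolve_right hi₃
    have hcsS : ∀ i ∉ S, c i = 0 := by
      intro i hiS
      rcases eq_or_ne i i₃ with rfl | hne
      · exact hc3
      · refine hcs i ?_
        rw [Finset.mem_insert]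
        push_neg
        exact ⟨hne, hiS⟩
    exact hSR c hcsS hcj
  have hmemD : insert i₃ S ∈ D := by
    rw [hD, Finset.mem_filter, Finset.mem_powerset]
    exact ⟨Finset.insert_subset hi₃I hSI, hIS.trans (Finset.subset_insert _ _), hR'⟩
  have hle := hSmax _ hmemD
  rw [Finset.card_insert_of_notMem hi₃S] at hle
  omega

end SSK

/-- Part (K1) of the Shapley–Snow theorem: a matrix game with nonzero value has a
square invertible submatrix (a Shapley–Snow kernel) `Ā` with
`val(Ā) = val(A) = det(Ā)/Σ_{ij} Ā^{ij} = (𝟏ᵀ Ā⁻¹ 𝟏)⁻¹`.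
Here the `(i,j)`-th cofactor `Ā^{ij}` equals `adjugate Ā j i`. -/
theorem shapley_snow_K1 {m n : ℕ} (hm : 0 < m) (hn : 0 < n)
    (A : Matrix (Fin m) (Fin n) ℝ) (hval : matrixVal A ≠ 0) :
    ∃ (k : ℕ) (_ : 0 < k) (ρ : Fin k → Fin m) (σ : Fin k → Fin n),
      Function.Injective ρ ∧ Function.Injective σ ∧
      IsUnit (A.submatrix ρ σ).det ∧
      matrixVal (A.submatrix ρ σ) = matrixVal A ∧
      matrixVal A =
        (A.submatrix ρ σ).det / (∑ i, ∑ j, (A.submatrix ρ σ).adjugate j i) ∧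
      matrixVal A = (∑ i, ∑ j, (A.submatrix ρ σ)⁻¹ i j)⁻¹ := by
  classical
  obtain ⟨x, hx, hxopt⟩ := SSK.exists_opt_row hm hn A
  obtain ⟨y, hy, hyopt⟩ := SSK.exists_opt_col hm hn A
  set v : ℝ := matrixVal A with hv
  obtain ⟨xh, hxh, hxhopt, hxhind⟩ := SSK.exists_basic_opt hval hx hy hxopt hyopt
  -- player 2 via the transposed negated game
  set B : Matrix (Fin n) (Fin m) ℝ := -Aᵀ with hB
  have hBapp : ∀ (j : Fin n) (i : Fin m), B j i = -A i j := by
    intro j i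
    rw [hB, Matrix.neg_apply, Matrix.transpose_apply]
  have hBvm : ∀ (z : Fin n → ℝ) (i : Fin m), (z ᵥ* B) i = -((A *ᵥ z) i) := by
    intro z i
    rw [SSK.vecMul_apply, SSK.mulVec_apply, ← Finset.sum_neg_distrib]
    refine Finset.sum_congr rfl fun j _ => ?_
    rw [hBapp]; ring
  have hBmv : ∀ (z : Fin m → ℝ) (j : Fin n), (B *ᵥ z) j = -((z ᵥ* A) j) := by
    intro z j
    rw [SSK.mulVec_apply, SSK.vecMul_apply, ← Finset.sum_neg_distrib]
    refine Finset.sum_congr rfl fun i _ => ?_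
    rw [hBapp]; ring
  have hyB : ∀ i, -v ≤ (y ᵥ* B) i := fun i => by rw [hBvm]; linarith [hyopt i]
  have hxB : ∀ j, (B *ᵥ x) j ≤ -v := fun j => by rw [hBmv]; linarith [hxopt j]
  obtain ⟨yh, hyh, hyhopt, hyhind⟩ :=
    SSK.exists_basic_opt (v := -v) (neg_ne_zero.mpr hval) hy hx hyB hxB
  have hyhA : ∀ i, (A *ᵥ yh) i ≤ v := fun i => by
    have := hyhopt i
    rw [hBvm] at this
    linarith
  -- index sets
  set I₁ : Finset (Fin m) := Finset.univ.filter (fun i => xh i ≠ 0) with hI₁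
  set J : Finset (Fin n) := Finset.univ.filter (fun j => (xh ᵥ* A) j = v) with hJ
  set J₁ : Finset (Fin n) := Finset.univ.filter (fun j => yh j ≠ 0) with hJ₁
  set I : Finset (Fin m) := Finset.univ.filter (fun i => (A *ᵥ yh) i = v) with hI
  have hcs := SSK.comp_slack hxh hyh hxhopt hyhA
  have hII : I₁ ⊆ I := by
    intro i hi
    rw [hI₁, Finset.mem_filter] at hi
    rw [hI, Finset.mem_filter]
    exact ⟨Finset.mem_univ i, hcs.1 i hi.2⟩
  have hJJ : J₁ ⊆ J := by
    intro j hj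
    rw [hJ₁, Finset.mem_filter] at hj
    rw [hJ, Finset.mem_filter]
    exact ⟨Finset.mem_univ j, hcs.2 j hj.2⟩
  have hR : SSK.RowIndepOn A I₁ J := by
    intro c hcsupp hct
    refine hxhind c (fun i hxi => hcsupp i ?_) (fun j hj => hct j ?_)
    · rw [hI₁, Finset.mem_filter]
      push_neg
      intro _
      exact hxi
    · rw [hJ, Finset.mem_filter]
      exact ⟨Finset.mem_univ j, hj⟩
  have hC : SSK.RowIndepOn Aᵀ J₁ I := by
    intro d hds hdr
    refine hyhind d (fun j h0 => hds j ?_) (fun i htight => ?_)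
    · rw [hJ₁, Finset.mem_filter]
      push_neg
      intro _
      exact h0
    · have hti : (A *ᵥ yh) i = v := by
        rw [hBvm] at htight
        linarith
      have h4 := hdr i (by rw [hI, Finset.mem_filter]; exact ⟨Finset.mem_univ i, hti⟩)
      have h5 : ∑ j, d j * B j i = -∑ j, d j * Aᵀ j i := by
        rw [← Finset.sum_neg_distrib]
        refine Finset.sum_congr rfl fun j _ => ?_
        rw [hBapp, Matrix.transpose_apply]
        ring
      rw [h5, h4, neg_zero]
  obtain ⟨S, hI₁S, hSI, hSR, hSC⟩ := SSK.exchange A I₁ I J₁ J hII hJJ hR hC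
  have hSR' : SSK.RowIndepOn Aᵀᵀ S J := by
    rw [Matrix.transpose_transpose]
    exact hSR
  obtain ⟨T, hJ₁T, hTJ, hTC, hTR'⟩ :=
    SSK.exchange Aᵀ J₁ J S S hJJ (Finset.Subset.refl S) hSC hSR'
  have hTR : SSK.RowIndepOn A S T := by
    rw [Matrix.transpose_transpose] at hTR'
    exact hTR'
  have hcardeq : T.card = S.card :=
    le_antisymm (SSK.rowIndepOn_card_le hTC) (SSK.rowIndepOn_card_le hTR)
  -- k and the embeddings
  have hkpos : 0 < S.card := by
    rw [Finset.card_pos]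
    obtain ⟨i, hi⟩ : ∃ i, xh i ≠ 0 := by
      by_contra hno
      push_neg at hno
      have : (1 : ℝ) = 0 := by
        rw [← hxh.2]
        exact Finset.sum_eq_zero fun i _ => hno i
      norm_num at this
    exact ⟨i, hI₁S (by rw [hI₁, Finset.mem_filter]; exact ⟨Finset.mem_univ i, hi⟩)⟩
  set k : ℕ := S.card with hk
  set e₁ : Fin k ≃o S := S.orderIsoOfFin rfl with he₁
  set e₂ : Fin k ≃o T := T.orderIsoOfFin hcardeq with he₂
  set ρ : Fin k → Fin m := fun t => (e₁ t).1 with hρ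
  set σ : Fin k → Fin n := fun t => (e₂ t).1 with hσ
  have hρinj : Function.Injective ρ := fun a b h => e₁.toEquiv.injective (Subtype.ext h)
  have hσinj : Function.Injective σ := fun a b h => e₂.toEquiv.injective (Subtype.ext h)
  have hρS : ∀ t, ρ t ∈ S := fun t => (e₁ t).2
  have hσT : ∀ t, σ t ∈ T := fun t => (e₂ t).2
  set M : Matrix (Fin k) (Fin k) ℝ := A.submatrix ρ σ with hM
  -- reindexing sums
  have hsumS : ∀ f : Fin m → ℝ, ∑ t : Fin k, f (ρ t) = ∑ i ∈ S, f i := by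
    intro f
    rw [← Finset.sum_coe_sort S f]
    exact e₁.toEquiv.sum_comp (fun i : S => f i.1)
  have hsumT : ∀ f : Fin n → ℝ, ∑ t : Fin k, f (σ t) = ∑ j ∈ T, f j := by
    intro f
    rw [← Finset.sum_coe_sort T f]
    exact e₂.toEquiv.sum_comp (fun j : T => f j.1)
  -- support vanishing
  have hxhS : ∀ i, i ∉ S → xh i = 0 := by
    intro i hi
    by_contra h0
    exact hi (hI₁S (by rw [hI₁, Finset.mem_filter]; exact ⟨Finset.mem_univ i, h0⟩))
  have hyhT : ∀ j, j ∉ T → yh j = 0 := by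
    intro j hj
    by_contra h0
    exact hj (hJ₁T (by rw [hJ₁, Finset.mem_filter]; exact ⟨Finset.mem_univ j, h0⟩))
  -- restricted strategies
  set xb : Fin k → ℝ := fun t => xh (ρ t) with hxb
  set yb : Fin k → ℝ := fun t => yh (σ t) with hyb
  have hxbmem : xb ∈ stdSimplex ℝ (Fin k) := by
    constructor
    · intro t
      exact hxh.1 (ρ t)
    · show ∑ t, xh (ρ t) = 1
      rw [hsumS xh, Finset.sum_subset (Finset.subset_univ S) (fun i _ hi => hxhS i hi)]
      exact hxh.2
  have hybmem : yb ∈ stdSimplex ℝ (Fin k) := by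
    constructor
    · intro t
      exact hyh.1 (σ t)
    · show ∑ t, yh (σ t) = 1
      rw [hsumT yh, Finset.sum_subset (Finset.subset_univ T) (fun j _ hj => hyhT j hj)]
      exact hyh.2
  have hxbeq : ∀ s, (xb ᵥ* M) s = v := by
    intro s
    have e5 : (xb ᵥ* M) s = ∑ t, xh (ρ t) * A (ρ t) (σ s) := by
      rw [SSK.vecMul_apply]
      rfl
    rw [e5, hsumS (fun i => xh i * A i (σ s)),
      Finset.sum_subset (Finset.subset_univ S) (fun i _ hi => by rw [hxhS i hi, zero_mul])]
    have : σ s ∈ J := hTJ (hσT s)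
    rw [hJ, Finset.mem_filter] at this
    rw [← SSK.vecMul_apply]
    exact this.2
  have hybeq : ∀ t, (M *ᵥ yb) t = v := by
    intro t
    have e5 : (M *ᵥ yb) t = ∑ s, A (ρ t) (σ s) * yh (σ s) := by
      rw [SSK.mulVec_apply]
      rfl
    rw [e5, hsumT (fun j => A (ρ t) j * yh j),
      Finset.sum_subset (Finset.subset_univ T) (fun j _ hj => by rw [hyhT j hj, mul_zero])]
    have : ρ t ∈ I := hSI (hρS t)
    rw [hI, Finset.mem_filter] at this
    rw [← SSK.mulVec_apply]
    exact this.2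
  -- invertibility
  have hdet : M.det ≠ 0 := by
    intro h0
    obtain ⟨cv, hcv0, hcvM⟩ := Matrix.exists_vecMul_eq_zero_iff.mpr h0
    set c : Fin m → ℝ := fun i => if h : i ∈ S then cv (e₁.symm ⟨i, h⟩) else 0 with hcdef
    have hp1 : ∀ t, c (ρ t) = cv t := by
      intro t
      have hmem : ρ t ∈ S := hρS t
      show (if h : ρ t ∈ S then cv (e₁.symm ⟨ρ t, h⟩) else 0) = cv t
      rw [dif_pos hmem]
      congr 1
      have : (⟨ρ t, hmem⟩ : S) = e₁ t := Subtype.ext rfl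
      rw [this]
      exact e₁.symm_apply_apply t
    have hcsupp : ∀ i ∉ S, c i = 0 := by
      intro i hi
      show (if h : i ∈ S then cv (e₁.symm ⟨i, h⟩) else 0) = 0
      rw [dif_neg hi]
    have hct : ∀ j ∈ T, ∑ i, c i * A i j = 0 := by
      intro j hj
      have e5 : ∑ i, c i * A i j = ∑ i ∈ S, c i * A i j :=
        (Finset.sum_subset (Finset.subset_univ S)
          (fun i _ hi => by rw [hcsupp i hi, zero_mul])).symm
      have e6 : ∑ i ∈ S, c i * A i j = ∑ t : Fin k, c (ρ t) * A (ρ t) j :=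
        (hsumS (fun i => c i * A i j)).symm
      have hσs : σ (e₂.symm ⟨j, hj⟩) = j := by
        show ((e₂ (e₂.symm ⟨j, hj⟩)) : Fin n) = j
        rw [e₂.apply_symm_apply]
      have e8 : ∑ t : Fin k, cv t * M t (e₂.symm ⟨j, hj⟩) = 0 := by
        rw [← SSK.vecMul_apply, hcvM]
        rfl
      have hMA : ∀ t, M t (e₂.symm ⟨j, hj⟩) = A (ρ t) j := by
        intro t
        rw [hM, Matrix.submatrix_apply, hσs]
      rw [e5, e6]
      calc ∑ t : Fin k, c (ρ t) * A (ρ t) j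
          = ∑ t : Fin k, cv t * M t (e₂.symm ⟨j, hj⟩) := by
            refine Finset.sum_congr rfl fun t _ => ?_
            rw [hp1 t, hMA t]
        _ = 0 := e8
    have hc0 := hTR c hcsupp hct
    apply hcv0
    funext t
    rw [← hp1 t, hc0]
    rfl
  have hunit : IsUnit M.det := isUnit_iff_ne_zero.mpr hdet
  -- value of the kernel
  have hvalM : matrixVal M = v :=
    SSK.matrixVal_eq_of hkpos M hxbmem hybmem (fun j => (hxbeq j).ge) (fun i => (hybeq i).le)
  -- the formulas
  have hyinv : yb = M⁻¹ *ᵥ (fun _ => v) := by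
    have h1 : M *ᵥ yb = (fun _ => v) := funext hybeq
    calc yb = (M⁻¹ * M) *ᵥ yb := by rw [Matrix.nonsing_inv_mul M hunit, Matrix.one_mulVec]
      _ = M⁻¹ *ᵥ (M *ᵥ yb) := (Matrix.mulVec_mulVec yb M⁻¹ M).symm
      _ = M⁻¹ *ᵥ (fun _ => v) := by rw [h1]
  have hSsum : (∑ i, ∑ j, M⁻¹ i j) * v = 1 := by
    have h2 : ∑ s, yb s = 1 := hybmem.2
    calc (∑ i, ∑ j, M⁻¹ i j) * v = ∑ i, ∑ j, M⁻¹ i j * v := by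
          rw [Finset.sum_mul]
          exact Finset.sum_congr rfl fun i _ => Finset.sum_mul _ _ _
      _ = ∑ s, (M⁻¹ *ᵥ (fun _ => v)) s :=
          Finset.sum_congr rfl fun s _ => (SSK.mulVec_apply M⁻¹ _ s).symm
      _ = ∑ s, yb s := by rw [← hyinv]
      _ = 1 := h2
  have hSne : (∑ i, ∑ j, M⁻¹ i j) ≠ 0 := by
    intro h
    rw [h, zero_mul] at hSsum
    exact zero_ne_one hSsum
  have hvinv : v = (∑ i, ∑ j, M⁻¹ i j)⁻¹ :=
    eq_inv_of_mul_eq_one_left (by rw [mul_comm] at hSsum; exact hSsum)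
  have hadj : ∀ i j, M.adjugate i j = M.det * M⁻¹ i j := by
    intro i j
    rw [Matrix.inv_def, Matrix.smul_apply, smul_eq_mul, Ring.inverse_eq_inv']
    field_simp
  have hsumadj : ∑ i, ∑ j, M.adjugate j i = M.det * (∑ i, ∑ j, M⁻¹ i j) := by
    calc ∑ i, ∑ j, M.adjugate j i = ∑ i, ∑ j, M.det * M⁻¹ j i :=
          Finset.sum_congr rfl fun i _ => Finset.sum_congr rfl fun j _ => hadj j i
      _ = M.det * ∑ i, ∑ j, M⁻¹ j i := by
          rw [Finset.mul_sum]
          exact Finset.sum_congr rfl fun i _ => (Finset.mul_sum _ _ _).symm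
      _ = M.det * ∑ i, ∑ j, M⁻¹ i j := by rw [Finset.sum_comm]
  have hform1 : v = M.det / (∑ i, ∑ j, M.adjugate j i) := by
    rw [hsumadj, hvinv]
    rw [div_mul_cancel_left₀ hdet]
  exact ⟨k, hkpos, ρ, σ, hρinj, hσinj, hunit, hvalM, hform1, hvinv⟩
end

section
/- Let A be an n×n real matrix game that is completely mixed (every optimal strategy pair has all components strictly positive) and suppose val(A) ≠ 0. Then A is invertible and val(A) = (𝟏ᵀ A⁻¹ 𝟏)⁻¹, where 𝟏 ∈ ℝ^n is the all-ones vector. -/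
open Matrix

/-- `(x0, y0)` is an optimal (saddle-point) strategy pair for the matrix game `A`. -/
def IsOptimalPair {m n : ℕ} (A : Matrix (Fin m) (Fin n) ℝ)
    (x0 : Fin m → ℝ) (y0 : Fin n → ℝ) : Prop :=
  x0 ∈ stdSimplex ℝ (Fin m) ∧ y0 ∈ stdSimplex ℝ (Fin n) ∧
    (∀ x ∈ stdSimplex ℝ (Fin m), payoff A x y0 ≤ payoff A x0 y0) ∧
    (∀ y ∈ stdSimplex ℝ (Fin n), payoff A x0 y0 ≤ payoff A x0 y)

section Aux

variable {n : ℕ}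

lemma dot_le_sup' (hn : 0 < n) {c y : Fin n → ℝ} (hy : y ∈ stdSimplex ℝ (Fin n)) :
    c ⬝ᵥ y ≤ Finset.univ.sup' (Finset.univ_nonempty_iff.2 ⟨⟨0, hn⟩⟩) c := by
  set s := Finset.univ.sup' (Finset.univ_nonempty_iff.2 ⟨⟨0, hn⟩⟩) c with hs
  calc c ⬝ᵥ y = ∑ j, c j * y j := rfl
    _ ≤ ∑ j, s * y j := by
        refine Finset.sum_le_sum fun j _ => ?_
        exact mul_le_mul_of_nonneg_right (Finset.le_sup' c (Finset.mem_univ j)) (hy.1 j)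
    _ = s * ∑ j, y j := by rw [Finset.mul_sum]
    _ = s := by rw [hy.2, mul_one]

lemma inf'_le_dot (hn : 0 < n) {c y : Fin n → ℝ} (hy : y ∈ stdSimplex ℝ (Fin n)) :
    Finset.univ.inf' (Finset.univ_nonempty_iff.2 ⟨⟨0, hn⟩⟩) c ≤ c ⬝ᵥ y := by
  set s := Finset.univ.inf' (Finset.univ_nonempty_iff.2 ⟨⟨0, hn⟩⟩) c with hs
  calc s = s * ∑ j, y j := by rw [hy.2, mul_one]
    _ = ∑ j, s * y j := by rw [Finset.mul_sum]
    _ ≤ ∑ j, c j * y j := by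
        refine Finset.sum_le_sum fun j _ => ?_
        exact mul_le_mul_of_nonneg_right (Finset.inf'_le c (Finset.mem_univ j)) (hy.1 j)
    _ = c ⬝ᵥ y := rfl

/-- Theorem of the alternative for matrix games, via hyperplane separation. -/
lemma game_alternative (hn : 0 < n) (A : Matrix (Fin n) (Fin n) ℝ) :
    (∃ y ∈ stdSimplex ℝ (Fin n), ∀ i, A.mulVec y i ≤ 0) ∨
    (∃ x ∈ stdSimplex ℝ (Fin n), ∀ j, 0 < A.vecMul x j) := by
  classical
  by_cases h1 : ∃ y ∈ stdSimplex ℝ (Fin n), ∀ i, A.mulVec y i ≤ 0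
  · exact Or.inl h1
  right
  set K : Set (Fin n → ℝ) := A.mulVec '' stdSimplex ℝ (Fin n) with hKdef
  set N : Set (Fin n → ℝ) := Set.univ.pi (fun _ => Set.Iic (0:ℝ)) with hNdef
  have hNmem : ∀ w : Fin n → ℝ, w ∈ N ↔ ∀ i, w i ≤ 0 := fun w =>
    ⟨fun hw i => hw i (Set.mem_univ i), fun hw i _ => hw i⟩
  have hNconv : Convex ℝ N := convex_pi fun _ _ => convex_Iic 0
  have hNclosed : IsClosed N := isClosed_set_pi fun _ _ => isClosed_Iic
  have hcont : Continuous (fun y : Fin n → ℝ => A.mulVec y) :=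
    A.mulVecLin.continuous_of_finiteDimensional
  have hKconv : Convex ℝ K := (convex_stdSimplex ℝ (Fin n)).linear_image A.mulVecLin
  have hKcomp : IsCompact K := (isCompact_stdSimplex ℝ (Fin n)).image hcont
  have hdisj : Disjoint N K := by
    rw [Set.disjoint_left]
    rintro u hu ⟨y, hy, rfl⟩
    exact h1 ⟨y, hy, fun i => (hNmem _).1 hu i⟩
  obtain ⟨f, u, v, hfN, huv, hfK⟩ :=
    geometric_hahn_banach_closed_compact hNconv hNclosed hKconv hKcomp hdisj
  have h0N : (0 : Fin n → ℝ) ∈ N := (hNmem 0).2 fun i => le_refl 0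
  have hu0 : 0 < u := by have := hfN 0 h0N; rwa [map_zero] at this
  have hfN' : ∀ w ∈ N, f w ≤ 0 := by
    intro w hw
    by_contra hpos
    push_neg at hpos
    have hker : ∀ t : ℝ, 0 ≤ t → f (t • w) < u := by
      intro t ht
      refine hfN _ ((hNmem _).2 fun i => ?_)
      exact mul_nonpos_of_nonneg_of_nonpos ht ((hNmem w).1 hw i)
    have h2 := hker ((u + 1) / f w) (by positivity)
    rw [f.map_smul, smul_eq_mul, div_mul_cancel₀ _ (ne_of_gt hpos)] at h2
    linarith
  set g : Fin n → ℝ := fun i => f (Pi.single i 1) with hg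
  have hgnn : ∀ i, 0 ≤ g i := by
    intro i
    have : (-(Pi.single i 1) : Fin n → ℝ) ∈ N := by
      refine (hNmem _).2 fun k => ?_
      simp only [Pi.neg_apply, neg_nonpos]
      rcases eq_or_ne i k with rfl | h
      · simp
      · simp [Pi.single_apply, h]
    have := hfN' _ this
    rw [map_neg] at this
    linarith
  have hfdot : ∀ w : Fin n → ℝ, f w = ∑ i, w i * g i := by
    intro w
    have hw : w = ∑ i, w i • (Pi.single i (1:ℝ) : Fin n → ℝ) := by
      funext k
      rw [Finset.sum_apply]
      simp [Pi.single_apply]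
    conv_lhs => rw [hw]
    rw [map_sum]
    simp [smul_eq_mul, hg]
  have hcol : ∀ j, v < ∑ i, A i j * g i := by
    intro j
    have hmem : A.mulVec (Pi.single j 1) ∈ K :=
      ⟨Pi.single j 1, single_mem_stdSimplex ℝ j, rfl⟩
    have := hfK _ hmem
    rw [hfdot] at this
    convert this using 2 with i
    congr 1
    simp [Matrix.mulVec, dotProduct, Pi.single_apply, Finset.sum_ite_eq']
  have hv0 : 0 < v := lt_trans hu0 huv
  set S := ∑ i, g i with hS
  have hSpos : 0 < S := by
    by_contra hSle
    push_neg at hSle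
    have hzero : ∀ i, g i = 0 := by
      intro i
      have h1 : g i ≤ S := Finset.single_le_sum (fun k _ => hgnn k) (Finset.mem_univ i)
      exact le_antisymm (le_trans h1 hSle) (hgnn i)
    have := hcol ⟨0, hn⟩
    simp [hzero] at this
    linarith
  refine ⟨S⁻¹ • g, ⟨fun i => mul_nonneg (by positivity) (hgnn i), ?_⟩, fun j => ?_⟩
  · simp only [Pi.smul_apply, smul_eq_mul, ← Finset.mul_sum]
    rw [← hS, inv_mul_cancel₀ (ne_of_gt hSpos)]
  · have : A.vecMul (S⁻¹ • g) j = S⁻¹ * ∑ i, g i * A i j := by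
      simp [Matrix.vecMul, dotProduct, Finset.mul_sum, mul_assoc]
    rw [this]
    have h2 : 0 < ∑ i, g i * A i j := by
      have := hcol j
      have heq : ∑ i, g i * A i j = ∑ i, A i j * g i := by
        refine Finset.sum_congr rfl fun i _ => mul_comm _ _
      rw [heq]; linarith
    positivity

end Aux

section Minimax

variable {n : ℕ}

/-- Von Neumann's minimax theorem: existence of an optimal pair achieving the value. -/
lemma exists_optimal_pair (hn : 0 < n) (A : Matrix (Fin n) (Fin n) ℝ) :
    ∃ x0 y0, IsOptimalPair A x0 y0 ∧ payoff A x0 y0 = matrixVal A := by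
  classical
  have hne : (Finset.univ : Finset (Fin n)).Nonempty := Finset.univ_nonempty_iff.2 ⟨⟨0, hn⟩⟩
  set F : (Fin n → ℝ) → ℝ := fun x => Finset.univ.inf' hne (A.vecMul x) with hF
  set G : (Fin n → ℝ) → ℝ := fun y => Finset.univ.sup' hne (A.mulVec y) with hG
  have hFcont : Continuous F := by
    apply Continuous.finset_inf'_apply hne
    intro j _
    exact (LinearMap.proj j ∘ₗ A.vecMulLinear).continuous_of_finiteDimensional
  have hGcont : Continuous G := by
    apply Continuous.finset_sup'_apply hne
    intro i _
    exact (LinearMap.proj i ∘ₗ A.mulVecLin).continuous_of_finiteDimensional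
  have hSne : (stdSimplex ℝ (Fin n)).Nonempty := ⟨Pi.single ⟨0, hn⟩ 1, single_mem_stdSimplex ℝ _⟩
  obtain ⟨x0, hx0, hx0max⟩ :=
    (isCompact_stdSimplex ℝ (Fin n)).exists_isMaxOn hSne hFcont.continuousOn
  obtain ⟨y0, hy0, hy0min⟩ :=
    (isCompact_stdSimplex ℝ (Fin n)).exists_isMinOn hSne hGcont.continuousOn
  set v1 := F x0 with hv1
  set v2 := G y0 with hv2
  -- weak duality
  have hweak : v1 ≤ v2 := by
    calc v1 ≤ A.vecMul x0 ⬝ᵥ y0 := inf'_le_dot hn hy0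
      _ = x0 ⬝ᵥ A.mulVec y0 := (Matrix.dotProduct_mulVec x0 A y0).symm
      _ = A.mulVec y0 ⬝ᵥ x0 := dotProduct_comm _ _
      _ ≤ v2 := dot_le_sup' hn hx0
  -- strong duality via the alternative
  have hstrong : v2 ≤ v1 := by
    by_contra hlt
    push_neg at hlt
    set c := (v1 + v2) / 2 with hc
    have hc1 : v1 < c := by rw [hc]; linarith
    have hc2 : c < v2 := by rw [hc]; linarith
    set B : Matrix (Fin n) (Fin n) ℝ := Matrix.of (fun i j => A i j - c) with hB
    rcases game_alternative hn B with ⟨y, hy, hyB⟩ | ⟨x, hx, hxB⟩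
    · have hAy : ∀ i, A.mulVec y i ≤ c := by
        intro i
        have := hyB i
        have hBy : B.mulVec y i = A.mulVec y i - c := by
          simp only [hB, Matrix.mulVec, dotProduct, Matrix.of_apply, sub_mul,
            Finset.sum_sub_distrib, ← Finset.mul_sum, hy.2, mul_one]
        linarith [hBy ▸ this]
      have h3 : G y ≤ c := Finset.sup'_le hne _ fun i _ => hAy i
      have h4 : v2 ≤ G y := hy0min hy
      linarith
    · have hxA : ∀ j, c < A.vecMul x j := by
        intro j
        have := hxB j
        have hBx : B.vecMul x j = A.vecMul x j - c := by
          simp only [hB, Matrix.vecMul, dotProduct, Matrix.of_apply, mul_sub,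
            Finset.sum_sub_distrib, ← Finset.sum_mul, hx.2, one_mul]
        linarith [hBx ▸ this]
      have : c ≤ F x := by
        apply Finset.le_inf' hne
        intro j _
        exact le_of_lt (hxA j)
      have h4 : F x ≤ v1 := hx0max hx
      linarith
  have hv : v1 = v2 := le_antisymm hweak hstrong
  -- saddle point properties
  have hright : ∀ y ∈ stdSimplex ℝ (Fin n), v1 ≤ payoff A x0 y := by
    intro y hy
    calc v1 ≤ A.vecMul x0 ⬝ᵥ y := inf'_le_dot hn hy
      _ = payoff A x0 y := (Matrix.dotProduct_mulVec x0 A y).symm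
  have hleft : ∀ x ∈ stdSimplex ℝ (Fin n), payoff A x y0 ≤ v1 := by
    intro x hx
    calc payoff A x y0 = A.mulVec y0 ⬝ᵥ x := dotProduct_comm _ _
      _ ≤ v2 := dot_le_sup' hn hx
      _ = v1 := hv.symm
  have hpay : payoff A x0 y0 = v1 :=
    le_antisymm (hleft x0 hx0) (hright y0 hy0)
  have hopt : IsOptimalPair A x0 y0 :=
    ⟨hx0, hy0, fun x hx => (hleft x hx).trans hpay.ge, fun y hy => hpay.le.trans' (le_refl _) |>.trans (hpay ▸ hright y hy)⟩
  refine ⟨x0, y0, hopt, ?_⟩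
  -- compute matrixVal
  haveI : Nonempty (stdSimplex ℝ (Fin n)) := ⟨⟨x0, hx0⟩⟩
  have hbdd : ∀ x : stdSimplex ℝ (Fin n),
      BddBelow (Set.range fun y : stdSimplex ℝ (Fin n) => payoff A x.1 y.1) := by
    intro x
    refine ⟨F x.1, ?_⟩
    rintro r ⟨y, rfl⟩
    calc F x.1 ≤ A.vecMul x.1 ⬝ᵥ y.1 := inf'_le_dot hn y.2
      _ = payoff A x.1 y.1 := (Matrix.dotProduct_mulVec _ A _).symm
  have hinf_le : ∀ x : stdSimplex ℝ (Fin n),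
      (⨅ y : stdSimplex ℝ (Fin n), payoff A x.1 y.1) ≤ v1 := by
    intro x
    refine le_trans (ciInf_le (hbdd x) ⟨y0, hy0⟩) ?_
    exact hleft x.1 x.2
  have hinf_x0 : (⨅ y : stdSimplex ℝ (Fin n), payoff A x0 y.1) = v1 := by
    refine le_antisymm (le_trans (ciInf_le (hbdd ⟨x0, hx0⟩) ⟨y0, hy0⟩) hpay.le) ?_
    exact le_ciInf fun y => hright y.1 y.2
  rw [hpay]
  unfold matrixVal
  refine le_antisymm ?_ ?_
  · exact le_ciSup_of_le ⟨v1, by rintro r ⟨x, rfl⟩; exact hinf_le x⟩ ⟨x0, hx0⟩ hinf_x0.ge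
  · exact ciSup_le hinf_le

end Minimax

/-- A completely mixed square matrix game with nonzero value is invertible and its
value satisfies `val(A) = (𝟏ᵀ A⁻¹ 𝟏)⁻¹`. -/
theorem completely_mixed_value_formula {n : ℕ} (hn : 0 < n)
    (A : Matrix (Fin n) (Fin n) ℝ)
    (hcm : ∀ x0 y0, IsOptimalPair A x0 y0 → (∀ i, 0 < x0 i) ∧ (∀ j, 0 < y0 j))
    (hval : matrixVal A ≠ 0) :
    IsUnit A.det ∧ matrixVal A = (∑ i, ∑ j, A⁻¹ i j)⁻¹ := by
  classical
  obtain ⟨x0, y0, hopt, hpay⟩ := exists_optimal_pair hn A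
  obtain ⟨hx0, hy0, hleft, hright⟩ := hopt
  set v := matrixVal A with hv
  obtain ⟨hx0pos, hy0pos⟩ := hcm x0 y0 ⟨hx0, hy0, hleft, hright⟩
  -- the payoff against a pure strategy
  have pay_left : ∀ (y : Fin n → ℝ) (i : Fin n), payoff A (Pi.single i 1) y = A.mulVec y i := by
    intro y i
    simp [payoff, single_dotProduct]
  have pay_right : ∀ (x : Fin n → ℝ) (j : Fin n), payoff A x (Pi.single j 1) = A.vecMul x j := by
    intro x j
    rw [payoff, Matrix.dotProduct_mulVec, dotProduct_single, mul_one]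
  -- complementary slackness: A y0 = v 𝟏 and x0ᵀ A = v 𝟏ᵀ
  have hAyle : ∀ i, A.mulVec y0 i ≤ v := by
    intro i
    have h := hleft (Pi.single i 1) (single_mem_stdSimplex ℝ i)
    rw [pay_left, hpay] at h
    exact h
  have hAy : ∀ i, A.mulVec y0 i = v := by
    by_contra hcon
    push_neg at hcon
    obtain ⟨k, hk⟩ := hcon
    have hklt : A.mulVec y0 k < v := lt_of_le_of_ne (hAyle k) hk
    have hsum : payoff A x0 y0 = ∑ i, x0 i * A.mulVec y0 i := rfl
    have hlt : ∑ i, x0 i * A.mulVec y0 i < ∑ i, x0 i * v := by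
      refine Finset.sum_lt_sum (fun i _ => mul_le_mul_of_nonneg_left (hAyle i) (hx0.1 i)) ?_
      exact ⟨k, Finset.mem_univ k, mul_lt_mul_of_pos_left hklt (hx0pos k)⟩
    rw [← Finset.sum_mul, hx0.2, one_mul] at hlt
    have heq : ∑ i, x0 i * A.mulVec y0 i = v := by rw [← hsum, hpay]
    linarith
  have hxAge : ∀ j, v ≤ A.vecMul x0 j := by
    intro j
    have h := hright (Pi.single j 1) (single_mem_stdSimplex ℝ j)
    rw [pay_right, hpay] at h
    exact h
  have hxA : ∀ j, A.vecMul x0 j = v := by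
    by_contra hcon
    push_neg at hcon
    obtain ⟨k, hk⟩ := hcon
    have hklt : v < A.vecMul x0 k := lt_of_le_of_ne (hxAge k) (Ne.symm hk)
    have hsum : payoff A x0 y0 = ∑ j, A.vecMul x0 j * y0 j := by
      rw [payoff, Matrix.dotProduct_mulVec]; rfl
    have hlt : ∑ j, v * y0 j < ∑ j, A.vecMul x0 j * y0 j := by
      refine Finset.sum_lt_sum (fun j _ => mul_le_mul_of_nonneg_right (hxAge j) (hy0.1 j)) ?_
      exact ⟨k, Finset.mem_univ k, mul_lt_mul_of_pos_right hklt (hy0pos k)⟩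
    rw [← Finset.mul_sum, hy0.2, mul_one] at hlt
    rw [← hsum, hpay] at hlt
    exact lt_irrefl v hlt
  -- kernel vectors with a positive entry lead to a contradiction
  have key : ∀ z : Fin n → ℝ, A.mulVec z = 0 → (∃ j, 0 < z j) → False := by
    intro z hz ⟨j0, hj0⟩
    have hzsum : ∑ j, z j = 0 := by
      have h1 : x0 ⬝ᵥ A.mulVec z = 0 := by rw [hz]; simp [dotProduct]
      rw [Matrix.dotProduct_mulVec] at h1
      have h2 : A.vecMul x0 ⬝ᵥ z = v * ∑ j, z j := by
        simp only [dotProduct, hxA, Finset.mul_sum]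
      rw [h2] at h1
      exact (mul_eq_zero.1 h1).resolve_left hval
    set t : Finset (Fin n) := Finset.univ.filter (fun j => 0 < z j) with ht
    have htne : t.Nonempty := ⟨j0, by simp [ht, hj0]⟩
    obtain ⟨jm, hjm, hjmeq⟩ := Finset.exists_mem_eq_inf' htne (fun j => y0 j / z j)
    set t0 : ℝ := y0 jm / z jm with ht0
    have hzjm : 0 < z jm := (Finset.mem_filter.1 hjm).2
    have ht0pos : 0 < t0 := div_pos (hy0pos jm) hzjm
    set y' : Fin n → ℝ := fun j => y0 j - t0 * z j with hy'
    have hy'jm : y' jm = 0 := by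
      simp [hy', ht0, div_mul_cancel₀ _ (ne_of_gt hzjm)]
    have hy'nn : ∀ j, 0 ≤ y' j := by
      intro j
      by_cases hj : 0 < z j
      · have hmem : j ∈ t := Finset.mem_filter.2 ⟨Finset.mem_univ j, hj⟩
        have : t0 ≤ y0 j / z j := hjmeq ▸ Finset.inf'_le _ hmem
        have h2 : t0 * z j ≤ (y0 j / z j) * z j := mul_le_mul_of_nonneg_right this (le_of_lt hj)
        rw [div_mul_cancel₀ _ (ne_of_gt hj)] at h2
        simp only [hy']
        linarith
      · push_neg at hj
        have : t0 * z j ≤ 0 := mul_nonpos_of_nonneg_of_nonpos (le_of_lt ht0pos) hj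
        simp only [hy']
        linarith [hy0.1 j]
    have hy'sum : ∑ j, y' j = 1 := by
      simp only [hy', Finset.sum_sub_distrib, ← Finset.mul_sum, hzsum, hy0.2, mul_zero, sub_zero]
    have hy'mem : y' ∈ stdSimplex ℝ (Fin n) := ⟨hy'nn, hy'sum⟩
    have hAy' : ∀ i, A.mulVec y' i = v := by
      intro i
      have : y' = y0 - t0 • z := by funext j; simp [hy', smul_eq_mul]
      rw [this, Matrix.mulVec_sub, Matrix.mulVec_smul]
      have hzi : A.mulVec z i = 0 := by rw [hz]; rfl
      simp only [Pi.sub_apply, Pi.smul_apply, hzi, smul_eq_mul, mul_zero, sub_zero]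
      exact hAy i
    have hpay' : ∀ x ∈ stdSimplex ℝ (Fin n), payoff A x y' = v := by
      intro x hx
      rw [payoff]
      calc x ⬝ᵥ A.mulVec y' = ∑ i, x i * v := by
            simp only [dotProduct, hAy']
        _ = v := by rw [← Finset.sum_mul, hx.2, one_mul]
    have hpayx0 : ∀ y ∈ stdSimplex ℝ (Fin n), payoff A x0 y = v := by
      intro y hy
      rw [payoff, Matrix.dotProduct_mulVec]
      calc A.vecMul x0 ⬝ᵥ y = ∑ j, v * y j := by
            simp only [dotProduct, hxA]
        _ = v := by rw [← Finset.mul_sum, hy.2, mul_one]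
    have hopt' : IsOptimalPair A x0 y' := by
      refine ⟨hx0, hy'mem, fun x hx => ?_, fun y hy => ?_⟩
      · rw [hpay' x hx, hpay' x0 hx0]
      · rw [hpay' x0 hx0, hpayx0 y hy]
    have := (hcm x0 y' hopt').2 jm
    rw [hy'jm] at this
    exact lt_irrefl 0 this
  -- invertibility
  have hdet : IsUnit A.det := by
    rw [isUnit_iff_ne_zero]
    intro hdet0
    obtain ⟨z, hzne, hz⟩ := Matrix.exists_mulVec_eq_zero_iff.2 hdet0
    obtain ⟨j0, hj0⟩ : ∃ j, z j ≠ 0 := by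
      by_contra hc
      push_neg at hc
      exact hzne (funext hc)
    rcases lt_or_gt_of_ne hj0 with hneg | hpos
    · refine key (-z) ?_ ⟨j0, by simpa using hneg⟩
      rw [Matrix.mulVec_neg, hz, neg_zero]
    · exact key z hz ⟨j0, hpos⟩
  refine ⟨hdet, ?_⟩
  -- the formula
  have hy0eq : y0 = A⁻¹.mulVec (fun _ => v) := by
    have h1 : A.mulVec y0 = fun _ => v := funext hAy
    rw [← h1, Matrix.mulVec_mulVec, Matrix.nonsing_inv_mul A hdet, Matrix.one_mulVec]
  set S : ℝ := ∑ i, ∑ j, A⁻¹ i j with hS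
  have hone : v * S = 1 := by
    have h1 : (1 : ℝ) = ∑ j, y0 j := hy0.2.symm
    rw [hy0eq] at h1
    have h2 : ∑ j, A⁻¹.mulVec (fun _ => v) j = v * S := by
      simp only [Matrix.mulVec, dotProduct, hS, Finset.mul_sum]
      refine Finset.sum_congr rfl fun i _ => Finset.sum_congr rfl fun j _ => ?_
      ring
    rw [h2] at h1
    exact h1.symm
  rw [mul_comm] at hone
  exact eq_inv_of_mul_eq_one_right hone
end

section
/- Consider a finite stochastic game with states s = 1,…,N, action sets {1,…,m_s} and {1,…,n_s} in state s, rewards r(s,a,b) ∈ ℝ, and transition probabilities p(s'|s,a,b) ≥ 0 with Σ_{s'=1}^N p(s'|s,a,b) = 1, and let β ∈ (0,1). Then there exists a unique vector v(β) ∈ ℝ^N satisfying v_s(β) = val[ R_β(s, v(β)) ] for every s = 1,…,N, where R_β(s,u) := [(1−β) r(s,a,b) + β Σ_{s'} p(s'|s,a,b) u_{s'}]_{a,b}. -/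
open Matrix

lemma payoff_expand {m n : ℕ} (A : Matrix (Fin m) (Fin n) ℝ) (x : Fin m → ℝ) (y : Fin n → ℝ) :
    payoff A x y = ∑ a, ∑ b, x a * A a b * y b := by
  simp [payoff, Matrix.mulVec, dotProduct, Finset.mul_sum, mul_assoc]

lemma simplex_ne {k : ℕ} (hk : 0 < k) : Nonempty (stdSimplex ℝ (Fin k)) := by
  refine ⟨⟨fun i => if i = ⟨0, hk⟩ then 1 else 0, fun i => ?_, ?_⟩⟩
  · dsimp only; split <;> norm_num
  · simp

lemma payoff_le_of_entry_le {m n : ℕ} {A : Matrix (Fin m) (Fin n) ℝ} {C : ℝ}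
    (h : ∀ a b, A a b ≤ C) {x : Fin m → ℝ} {y : Fin n → ℝ}
    (hx : x ∈ stdSimplex ℝ (Fin m)) (hy : y ∈ stdSimplex ℝ (Fin n)) :
    payoff A x y ≤ C := by
  rw [payoff_expand]
  calc ∑ a, ∑ b, x a * A a b * y b ≤ ∑ a, ∑ b, x a * C * y b := by
        refine Finset.sum_le_sum fun a _ => Finset.sum_le_sum fun b _ => ?_
        exact mul_le_mul_of_nonneg_right (mul_le_mul_of_nonneg_left (h a b) (hx.1 a)) (hy.1 b)
    _ = C := by
        simp only [← Finset.sum_mul, ← Finset.mul_sum, hx.2, hy.2]; ring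

lemma le_payoff_of_le_entry {m n : ℕ} {A : Matrix (Fin m) (Fin n) ℝ} {C : ℝ}
    (h : ∀ a b, C ≤ A a b) {x : Fin m → ℝ} {y : Fin n → ℝ}
    (hx : x ∈ stdSimplex ℝ (Fin m)) (hy : y ∈ stdSimplex ℝ (Fin n)) :
    C ≤ payoff A x y := by
  rw [payoff_expand]
  calc C = ∑ a, ∑ b, x a * C * y b := by
        simp only [← Finset.sum_mul, ← Finset.mul_sum, hx.2, hy.2]; ring
    _ ≤ ∑ a, ∑ b, x a * A a b * y b := by
        refine Finset.sum_le_sum fun a _ => Finset.sum_le_sum fun b _ => ?_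
        exact mul_le_mul_of_nonneg_right (mul_le_mul_of_nonneg_left (h a b) (hx.1 a)) (hy.1 b)

lemma matrixVal_le_add {m n : ℕ} (hm : 0 < m) (hn : 0 < n)
    {A B : Matrix (Fin m) (Fin n) ℝ} {c : ℝ}
    (h : ∀ a b, A a b ≤ B a b + c) :
    matrixVal A ≤ matrixVal B + c := by
  have hXm := simplex_ne hm
  have hYn := simplex_ne hn
  set SA : ℝ := ∑ a, ∑ b, |A a b| with hSA
  set SB : ℝ := ∑ a, ∑ b, |B a b| with hSB
  have habsA : ∀ (a : Fin m) (b : Fin n), |A a b| ≤ SA := by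
    intro a b
    calc |A a b| ≤ ∑ b, |A a b| := Finset.single_le_sum (f := fun b => |A a b|) (fun i _ => abs_nonneg _) (Finset.mem_univ _)
      _ ≤ SA := Finset.single_le_sum (f := fun a => ∑ b, |A a b|)
          (fun i _ => Finset.sum_nonneg fun j _ => abs_nonneg _) (Finset.mem_univ _)
  have habsB : ∀ (a : Fin m) (b : Fin n), |B a b| ≤ SB := by
    intro a b
    calc |B a b| ≤ ∑ b, |B a b| := Finset.single_le_sum (f := fun b => |B a b|) (fun i _ => abs_nonneg _) (Finset.mem_univ _)
      _ ≤ SB := Finset.single_le_sum (f := fun a => ∑ b, |B a b|)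
          (fun i _ => Finset.sum_nonneg fun j _ => abs_nonneg _) (Finset.mem_univ _)
  have bddA : ∀ x : stdSimplex ℝ (Fin m),
      BddBelow (Set.range fun y : stdSimplex ℝ (Fin n) => payoff A x.1 y.1) := by
    intro x
    refine ⟨-SA, ?_⟩
    rintro _ ⟨y, rfl⟩
    exact le_payoff_of_le_entry (fun a b => neg_le_of_abs_le (habsA a b)) x.2 y.2
  have bddB : ∀ x : stdSimplex ℝ (Fin m),
      BddBelow (Set.range fun y : stdSimplex ℝ (Fin n) => payoff B x.1 y.1) := by
    intro x
    refine ⟨-SB, ?_⟩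
    rintro _ ⟨y, rfl⟩
    exact le_payoff_of_le_entry (fun a b => neg_le_of_abs_le (habsB a b)) x.2 y.2
  have key : ∀ x : stdSimplex ℝ (Fin m),
      (⨅ y : stdSimplex ℝ (Fin n), payoff A x.1 y.1)
        ≤ (⨅ y : stdSimplex ℝ (Fin n), payoff B x.1 y.1) + c := by
    intro x
    rw [← sub_le_iff_le_add]
    refine le_ciInf fun y => ?_
    rw [sub_le_iff_le_add]
    calc (⨅ y : stdSimplex ℝ (Fin n), payoff A x.1 y.1) ≤ payoff A x.1 y.1 :=
        ciInf_le (bddA x) y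
      _ ≤ payoff B x.1 y.1 + c := by
          have := payoff_expand A x.1 y.1
          rw [payoff_expand A, payoff_expand B]
          have : ∀ (a : Fin m) (b : Fin n), x.1 a * A a b * y.1 b
              ≤ x.1 a * (B a b + c) * y.1 b := fun a b =>
            mul_le_mul_of_nonneg_right (mul_le_mul_of_nonneg_left (h a b) (x.2.1 a)) (y.2.1 b)
          calc ∑ a, ∑ b, x.1 a * A a b * y.1 b
              ≤ ∑ a, ∑ b, x.1 a * (B a b + c) * y.1 b :=
                Finset.sum_le_sum fun a _ => Finset.sum_le_sum fun b _ => this a b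
            _ = (∑ a, ∑ b, x.1 a * B a b * y.1 b) + c := by
                have : ∀ (a : Fin m) (b : Fin n), x.1 a * (B a b + c) * y.1 b
                    = x.1 a * B a b * y.1 b + x.1 a * c * y.1 b := fun a b => by ring
                simp only [this, Finset.sum_add_distrib]
                congr 1
                simp only [mul_comm, ← Finset.sum_mul, ← Finset.mul_sum, x.2.2, y.2.2]
                ring
  refine ciSup_le fun x => ?_
  refine le_trans (key x) (add_le_add ?_ le_rfl)
  refine le_ciSup_of_le ⟨SB, ?_⟩ x le_rfl
  rintro _ ⟨z, rfl⟩
  obtain ⟨y0⟩ := hYn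
  exact le_trans (ciInf_le (bddB z) y0)
    (payoff_le_of_entry_le (fun a b => le_of_abs_le (habsB a b)) z.2 y0.2)

lemma matrixVal_abs_sub_le {m n : ℕ} (hm : 0 < m) (hn : 0 < n)
    {A B : Matrix (Fin m) (Fin n) ℝ} {c : ℝ}
    (h : ∀ a b, |A a b - B a b| ≤ c) :
    |matrixVal A - matrixVal B| ≤ c := by
  rw [abs_sub_le_iff]
  constructor
  · rw [sub_le_iff_le_add, add_comm]
    exact matrixVal_le_add hm hn fun a b => by
      have := (abs_sub_le_iff.mp (h a b)).1; linarith
  · rw [sub_le_iff_le_add, add_comm]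
    exact matrixVal_le_add hm hn fun a b => by
      have := (abs_sub_le_iff.mp (h a b)).2; linarith

/-- The auxiliary Shapley matrix game
`R_β(s,u) = [(1−β) r(s,a,b) + β Σ_{s'} p(s'|s,a,b) u_{s'}]_{a,b}`. -/
noncomputable def shapleyMatrix {N : ℕ} {m n : Fin N → ℕ}
    (r : (s : Fin N) → Fin (m s) → Fin (n s) → ℝ)
    (p : (s : Fin N) → Fin (m s) → Fin (n s) → Fin N → ℝ)
    (β : ℝ) (s : Fin N) (u : Fin N → ℝ) : Matrix (Fin (m s)) (Fin (n s)) ℝ :=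
  Matrix.of fun a b => (1 - β) * r s a b + β * ∑ s', p s a b s' * u s'

/-- Shapley's theorem: for every discount factor `β ∈ (0,1)` there is a unique vector
`v(β)` with `v_s(β) = val[R_β(s, v(β))]` for all states `s`. -/
theorem shapley_fixed_point_exists_unique {N : ℕ} (hN : 0 < N) (m n : Fin N → ℕ)
    (hm : ∀ s, 0 < m s) (hn : ∀ s, 0 < n s)
    (r : (s : Fin N) → Fin (m s) → Fin (n s) → ℝ)
    (p : (s : Fin N) → Fin (m s) → Fin (n s) → Fin N → ℝ)
    (hp : ∀ s a b s', 0 ≤ p s a b s') (hp1 : ∀ s a b, ∑ s', p s a b s' = 1)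
    (β : ℝ) (hβ : β ∈ Set.Ioo (0 : ℝ) 1) :
    ∃! v : Fin N → ℝ, ∀ s, v s = matrixVal (shapleyMatrix r p β s v) := by
  obtain ⟨hβ0, hβ1⟩ := hβ
  set T : (Fin N → ℝ) → (Fin N → ℝ) :=
    fun u s => matrixVal (shapleyMatrix r p β s u) with hT
  set K : NNReal := ⟨β, hβ0.le⟩ with hK
  have hcontr : ContractingWith K T := by
    constructor
    · exact_mod_cast hβ1
    · rw [lipschitzWith_iff_dist_le_mul]
      intro u v
      rw [dist_pi_le_iff (by positivity)]
      intro s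
      rw [Real.dist_eq]
      have entry : ∀ (a : Fin (m s)) (b : Fin (n s)),
          |shapleyMatrix r p β s u a b - shapleyMatrix r p β s v a b| ≤ β * dist u v := by
        intro a b
        have : shapleyMatrix r p β s u a b - shapleyMatrix r p β s v a b
            = β * ∑ s', p s a b s' * (u s' - v s') := by
          simp only [shapleyMatrix, Matrix.of_apply, Finset.mul_sum, mul_sub,
            ← Finset.sum_sub_distrib]
          ring_nf
          rw [← Finset.sum_sub_distrib]
        rw [this, abs_mul, abs_of_nonneg hβ0.le]
        refine mul_le_mul_of_nonneg_left ?_ hβ0.le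
        calc |∑ s', p s a b s' * (u s' - v s')| ≤ ∑ s', |p s a b s' * (u s' - v s')| :=
            Finset.abs_sum_le_sum_abs _ _
          _ ≤ ∑ s', p s a b s' * dist u v := by
              refine Finset.sum_le_sum fun s' _ => ?_
              rw [abs_mul, abs_of_nonneg (hp s a b s')]
              refine mul_le_mul_of_nonneg_left ?_ (hp s a b s')
              rw [← Real.dist_eq]
              exact dist_le_pi_dist u v s'
          _ = dist u v := by rw [← Finset.sum_mul, hp1 s a b, one_mul]
      exact matrixVal_abs_sub_le (hm s) (hn s) entry
  refine ⟨hcontr.fixedPoint T, ?_, ?_⟩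
  · intro s
    have := hcontr.fixedPoint_isFixedPt
    conv_lhs => rw [← this]
  · intro w hw
    refine hcontr.fixedPoint_unique ?_
    funext s
    exact (hw s).symm
end
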